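/- arXiv:2503.05036 — 7 statements merged into one kernel-verified Lean document; each statement's English description precedes it below -/
import Mathlib

section
/- For all vectors a, b, x, y in H and every q ∈ [0,1] such that ‖x‖ = ‖y‖ = 1 and ⟨x,y⟩ = q, one has |⟨a,x⟩·⟨b,y⟩| ≤ (‖a‖·‖b‖ + q·|⟨a,b⟩|)/2 + (√(1−q²)/2)·√(‖a‖²·‖b‖² − |⟨a,b⟩|²) (generalized Buzano inequality). -/
open scoped ComplexInnerProductSpace

lemma cs2 (r₁ r₂ s₁ s₂ : ℝ) (h1 : 0 ≤ r₁) (h2 : 0 ≤ r₂) (h3 : 0 ≤ s₁) (h4 : 0 ≤ s₂) :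
    r₁*s₁ + r₂*s₂ ≤ Real.sqrt (r₁^2+r₂^2) * Real.sqrt (s₁^2+s₂^2) := by
  have key : (r₁*s₁+r₂*s₂)^2 ≤ (r₁^2+r₂^2)*(s₁^2+s₂^2) := by nlinarith [sq_nonneg (r₁*s₂-r₂*s₁)]
  calc r₁*s₁+r₂*s₂ = Real.sqrt ((r₁*s₁+r₂*s₂)^2) := (Real.sqrt_sq (by positivity)).symm
  _ ≤ Real.sqrt ((r₁^2+r₂^2)*(s₁^2+s₂^2)) := Real.sqrt_le_sqrt key
  _ = _ := Real.sqrt_mul (by positivity) _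

lemma keyA (A₁ A₂ B₁ B₂ : ℂ) (q : ℝ) (hq0 : 0 ≤ q) (hq1 : q ≤ 1) :
    ‖(q:ℂ)*(A₁*B₁+A₂*B₂) + (A₁*B₁-A₂*B₂)‖ ≤
      Real.sqrt (‖A₁‖^2+‖A₂‖^2) * Real.sqrt (‖B₁‖^2+‖B₂‖^2)
        + q*‖(starRingEnd ℂ) A₁*B₁+(starRingEnd ℂ) A₂*B₂‖ := by
  have hqn : ‖(q:ℂ)‖ = q := by rw [Complex.norm_real, Real.norm_eq_abs, abs_of_nonneg hq0]
  set c : ℂ := if A₁ = 0 then 1 else A₁ / (starRingEnd ℂ) A₁ with hcdef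
  have hc : ‖c‖ = 1 := by
    rw [hcdef]; split_ifs with h
    · simp
    · rw [norm_div, RCLike.norm_conj, div_self]
      simpa using h
  have hcA : c * (starRingEnd ℂ) A₁ = A₁ := by
    rw [hcdef]; split_ifs with h
    · simp [h]
    · exact div_mul_cancel₀ A₁ (by simpa using h)
  set C₂ : ℂ := -((1:ℂ)-q)*A₂ - q*c*(starRingEnd ℂ) A₂ with hC₂
  have hid : (q:ℂ)*(A₁*B₁+A₂*B₂) + (A₁*B₁-A₂*B₂)
      = (A₁*B₁ + C₂*B₂) + (q*c)*((starRingEnd ℂ) A₁*B₁+(starRingEnd ℂ) A₂*B₂) := by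
    rw [hC₂]; linear_combination -(q:ℂ)*B₁*hcA
  rw [hid]
  have hC₂n : ‖C₂‖ ≤ ‖A₂‖ := by
    calc ‖C₂‖ ≤ ‖-((1:ℂ)-q)*A₂‖ + ‖q*c*(starRingEnd ℂ) A₂‖ := norm_sub_le _ _
    _ = (1-q)*‖A₂‖ + q*‖A₂‖ := by
        rw [norm_mul, norm_mul, norm_mul, hc, RCLike.norm_conj, norm_neg]
        have h1q : ‖(1:ℂ)-q‖ = 1-q := by
          rw [show (1:ℂ)-q = ((1-q : ℝ):ℂ) by push_cast; ring, Complex.norm_real,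
            Real.norm_eq_abs, abs_of_nonneg (by linarith)]
        rw [h1q, hqn]; ring
    _ = ‖A₂‖ := by ring
  calc ‖(A₁*B₁ + C₂*B₂) + (q*c)*((starRingEnd ℂ) A₁*B₁+(starRingEnd ℂ) A₂*B₂)‖
      ≤ ‖A₁*B₁ + C₂*B₂‖ + ‖(q*c)*((starRingEnd ℂ) A₁*B₁+(starRingEnd ℂ) A₂*B₂)‖ :=
        norm_add_le _ _
    _ ≤ (‖A₁‖*‖B₁‖ + ‖A₂‖*‖B₂‖) + q*‖(starRingEnd ℂ) A₁*B₁+(starRingEnd ℂ) A₂*B₂‖ := by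
        gcongr
        · calc ‖A₁*B₁ + C₂*B₂‖ ≤ ‖A₁*B₁‖ + ‖C₂*B₂‖ := norm_add_le _ _
          _ ≤ ‖A₁‖*‖B₁‖ + ‖A₂‖*‖B₂‖ := by
              rw [norm_mul, norm_mul]; gcongr
        · rw [norm_mul, norm_mul, hc, hqn, mul_one]
    _ ≤ _ := by
        gcongr ?_ + _
        exact cs2 _ _ _ _ (norm_nonneg _) (norm_nonneg _) (norm_nonneg _) (norm_nonneg _)
lemma sqrt_le_of_sq_le {x y : ℝ} (hx : 0 ≤ x) (h : x^2 ≤ y) : x ≤ Real.sqrt y := by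
  calc x = Real.sqrt (x^2) := (Real.sqrt_sq hx).symm
  _ ≤ _ := Real.sqrt_le_sqrt h

set_option maxHeartbeats 2000000 in
lemma core {H : Type*} [NormedAddCommGroup H] [InnerProductSpace ℂ H]
    (a b e f : H) (q : ℝ) (hq0 : 0 ≤ q) (hq1 : q ≤ 1)
    (he : ‖e‖ = 1) (hf : ‖f‖ = 1) (hef : ⟪e, f⟫ = 0) :
    ‖⟪a, (Real.sqrt ((1+q)/2) : ℂ) • e + (Real.sqrt ((1-q)/2) : ℂ) • f⟫ *
     ⟪b, (Real.sqrt ((1+q)/2) : ℂ) • e - (Real.sqrt ((1-q)/2) : ℂ) • f⟫‖ ≤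
      (‖a‖*‖b‖ + q*‖⟪a,b⟫‖)/2 +
        (Real.sqrt (1-q^2)/2) * Real.sqrt (‖a‖^2*‖b‖^2 - ‖⟪a,b⟫‖^2) := by
  set α := Real.sqrt ((1+q)/2) with hα
  set β := Real.sqrt ((1-q)/2) with hβ
  have hα0 : 0 ≤ α := Real.sqrt_nonneg _
  have hβ0 : 0 ≤ β := Real.sqrt_nonneg _
  have hα2 : α^2 = (1+q)/2 := Real.sq_sqrt (by linarith)
  have hβ2 : β^2 = (1-q)/2 := Real.sq_sqrt (by linarith)
  have hαβ : α*β = Real.sqrt (1-q^2)/2 := by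
    rw [hα, hβ, ← Real.sqrt_mul (by linarith),
      show (1+q)/2*((1-q)/2) = (1-q^2)*(1/4) by ring,
      Real.sqrt_mul (by nlinarith [sq_nonneg q]) (1/4),
      show (1/4:ℝ) = (1/2)^2 by norm_num, Real.sqrt_sq (by norm_num)]
    ring
  have hα2c : (α:ℂ)^2 = (1+(q:ℂ))/2 := by
    have := congrArg (Complex.ofReal) hα2; push_cast at this; exact this
  have hβ2c : (β:ℂ)^2 = (1-(q:ℂ))/2 := by
    have := congrArg (Complex.ofReal) hβ2; push_cast at this; exact this
  set A₁ := ⟪a, e⟫ with hA₁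
  set A₂ := ⟪a, f⟫ with hA₂
  set B₁ := ⟪b, e⟫ with hB₁
  set B₂ := ⟪b, f⟫ with hB₂
  have h1 : ⟪a, (α:ℂ) • e + (β:ℂ) • f⟫ = (α:ℂ)*A₁ + (β:ℂ)*A₂ := by
    rw [inner_add_right, inner_smul_right, inner_smul_right]
  have h2 : ⟪b, (α:ℂ) • e - (β:ℂ) • f⟫ = (α:ℂ)*B₁ - (β:ℂ)*B₂ := by
    rw [inner_sub_right, inner_smul_right, inner_smul_right]
  rw [h1, h2]
  have hprod : ((α:ℂ)*A₁ + (β:ℂ)*A₂) * ((α:ℂ)*B₁ - (β:ℂ)*B₂)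
      = ((q:ℂ)*(A₁*B₁+A₂*B₂) + (A₁*B₁-A₂*B₂))/2 + ((α:ℂ)*(β:ℂ))*(A₂*B₁-A₁*B₂) := by
    linear_combination A₁*B₁*hα2c - A₂*B₂*hβ2c
  rw [hprod]
  -- abbreviations
  set na := ‖A₁‖^2+‖A₂‖^2 with hna
  set nb := ‖B₁‖^2+‖B₂‖^2 with hnb
  set Na := Real.sqrt na with hNa
  set Nb := Real.sqrt nb with hNb
  set T₂ := ‖(starRingEnd ℂ) A₁*B₁+(starRingEnd ℂ) A₂*B₂‖ with hT₂
  set Dn := ‖A₂*B₁-A₁*B₂‖ with hDn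
  set P := ‖a‖*‖b‖ with hP
  set T := ‖⟪a,b⟫‖ with hT
  -- keyB identity
  have hkeyB : Dn^2 + T₂^2 = na*nb := by
    rw [hDn, hT₂, hna, hnb]
    simp only [Complex.sq_norm, Complex.normSq_apply, Complex.mul_re,
      Complex.mul_im, Complex.add_re, Complex.add_im, Complex.sub_re, Complex.sub_im,
      Complex.conj_re, Complex.conj_im]
    ring

  -- projections
  have hee : ⟪e, e⟫ = (1:ℂ) := by rw [inner_self_eq_norm_sq_to_K, he]; norm_num
  have hff : ⟪f, f⟫ = (1:ℂ) := by rw [inner_self_eq_norm_sq_to_K, hf]; norm_num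
  have hfe : ⟪f, e⟫ = 0 := by rw [← inner_conj_symm, hef, map_zero]
  set pa := (starRingEnd ℂ) A₁ • e + (starRingEnd ℂ) A₂ • f with hpa
  set pb := (starRingEnd ℂ) B₁ • e + (starRingEnd ℂ) B₂ • f with hpb
  have hea' : ⟪e, a - pa⟫ = 0 := by
    rw [inner_sub_right, hpa, inner_add_right, inner_smul_right, inner_smul_right, hee, hef,
      ← inner_conj_symm e a, ← hA₁]; ring
  have hfa' : ⟪f, a - pa⟫ = 0 := by
    rw [inner_sub_right, hpa, inner_add_right, inner_smul_right, inner_smul_right, hfe, hff,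
      ← inner_conj_symm f a, ← hA₂]; ring
  have heb' : ⟪e, b - pb⟫ = 0 := by
    rw [inner_sub_right, hpb, inner_add_right, inner_smul_right, inner_smul_right, hee, hef,
      ← inner_conj_symm e b, ← hB₁]; ring
  have hfb' : ⟪f, b - pb⟫ = 0 := by
    rw [inner_sub_right, hpb, inner_add_right, inner_smul_right, inner_smul_right, hfe, hff,
      ← inner_conj_symm f b, ← hB₂]; ring
  have hpaa' : ⟪pa, a - pa⟫ = 0 := by
    rw [hpa, inner_add_left, inner_smul_left, inner_smul_left, hea', hfa']; ring
  have hpab' : ⟪pa, b - pb⟫ = 0 := by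
    rw [hpa, inner_add_left, inner_smul_left, inner_smul_left, heb', hfb']; ring
  have hpbb' : ⟪pb, b - pb⟫ = 0 := by
    rw [hpb, inner_add_left, inner_smul_left, inner_smul_left, heb', hfb']; ring
  have ha'pb : ⟪a - pa, pb⟫ = 0 := by
    rw [← inner_conj_symm, hpb, inner_add_left, inner_smul_left, inner_smul_left, hea', hfa']
    simp
  have hpanorm : ‖pa‖^2 = na := by
    rw [hpa, norm_add_sq (𝕜 := ℂ), inner_smul_left, inner_smul_right, hef, norm_smul, norm_smul]
    simp [he, hf, hna]
  have hpbnorm : ‖pb‖^2 = nb := by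
    rw [hpb, norm_add_sq (𝕜 := ℂ), inner_smul_left, inner_smul_right, hef, norm_smul, norm_smul]
    simp [he, hf, hnb]
  have hanorm : ‖a‖^2 = na + ‖a - pa‖^2 := by
    have : a = pa + (a - pa) := by abel
    rw [show ‖a‖ = ‖pa + (a - pa)‖ by rw [← this], norm_add_sq (𝕜 := ℂ), hpaa', hpanorm]
    simp
  have hbnorm : ‖b‖^2 = nb + ‖b - pb‖^2 := by
    have : b = pb + (b - pb) := by abel
    rw [show ‖b‖ = ‖pb + (b - pb)‖ by rw [← this], norm_add_sq (𝕜 := ℂ), hpbb', hpbnorm]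
    simp
  have hpapb : ⟪pa, pb⟫ = A₁ * (starRingEnd ℂ) B₁ + A₂ * (starRingEnd ℂ) B₂ := by
    rw [hpa, hpb, inner_add_left, inner_add_right, inner_add_right, inner_smul_left,
      inner_smul_left, inner_smul_left, inner_smul_left]
    simp only [inner_smul_right, hee, hff, hef, hfe]
    simp [Complex.conj_conj]
  have hab : ⟪a, b⟫ = (A₁ * (starRingEnd ℂ) B₁ + A₂ * (starRingEnd ℂ) B₂) + ⟪a - pa, b - pb⟫ := by
    have h3 : a = pa + (a - pa) := by abel
    have h4 : b = pb + (b - pb) := by abel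
    calc ⟪a, b⟫ = ⟪pa + (a - pa), pb + (b - pb)⟫ := by rw [← h3, ← h4]
    _ = ⟪pa, pb⟫ + ⟪pa, b - pb⟫ + (⟪a - pa, pb⟫ + ⟪a - pa, b - pb⟫) := by
        simp only [inner_add_left, inner_add_right]; ring
    _ = _ := by rw [hpapb, hpab', ha'pb]; ring

  -- remaining quantities
  set x' := ‖a - pa‖ with hx'
  set y' := ‖b - pb‖ with hy'
  have hx'0 : 0 ≤ x' := norm_nonneg _
  have hy'0 : 0 ≤ y' := norm_nonneg _
  have hna0 : (0:ℝ) ≤ na := by positivity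
  have hnb0 : (0:ℝ) ≤ nb := by positivity
  have hNa0 : 0 ≤ Na := Real.sqrt_nonneg _
  have hNb0 : 0 ≤ Nb := Real.sqrt_nonneg _
  have hNa2 : Na^2 = na := Real.sq_sqrt hna0
  have hNb2 : Nb^2 = nb := Real.sq_sqrt hnb0
  have hP0 : 0 ≤ P := by rw [hP]; positivity
  have hT0 : 0 ≤ T := norm_nonneg _
  have hT₂0 : 0 ≤ T₂ := norm_nonneg _
  have hDn0 : 0 ≤ Dn := norm_nonneg _
  have le_of_sq : ∀ u v : ℝ, 0 ≤ u → 0 ≤ v → u^2 ≤ v^2 → u ≤ v := by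
    intro u v hu hv h
    rw [← Real.sqrt_sq hu, ← Real.sqrt_sq hv]
    exact Real.sqrt_le_sqrt h
  have hP1 : Na*Nb + x'*y' ≤ P := by
    apply le_of_sq _ _ (by positivity) hP0
    have hPsq : P^2 = (Na^2+x'^2)*(Nb^2+y'^2) := by
      rw [hP, mul_pow, hanorm, hbnorm, hNa2, hNb2]
    have e0 : P^2 - (Na*Nb + x'*y')^2 = (Na*y' - Nb*x')^2 := by rw [hPsq]; ring
    linarith [sq_nonneg (Na*y' - Nb*x')]
  have hr : ‖⟪a - pa, b - pb⟫‖ ≤ x'*y' := norm_inner_le_norm _ _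
  have hT2' : ‖A₁ * (starRingEnd ℂ) B₁ + A₂ * (starRingEnd ℂ) B₂‖ = T₂ := by
    have hconj : (starRingEnd ℂ) (A₁ * (starRingEnd ℂ) B₁ + A₂ * (starRingEnd ℂ) B₂)
        = (starRingEnd ℂ) A₁*B₁+(starRingEnd ℂ) A₂*B₂ := by
      simp [map_add, map_mul]
    rw [hT₂, ← hconj, RCLike.norm_conj]
  have hThigh : T ≤ T₂ + x'*y' := by
    rw [hT, hab]
    calc ‖(A₁ * (starRingEnd ℂ) B₁ + A₂ * (starRingEnd ℂ) B₂) + ⟪a - pa, b - pb⟫‖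
        ≤ ‖A₁ * (starRingEnd ℂ) B₁ + A₂ * (starRingEnd ℂ) B₂‖ + ‖⟪a - pa, b - pb⟫‖ :=
          norm_add_le _ _
      _ ≤ T₂ + x'*y' := by rw [hT2']; gcongr
  have hTlow : T₂ - x'*y' ≤ T := by
    have h5 : A₁ * (starRingEnd ℂ) B₁ + A₂ * (starRingEnd ℂ) B₂ = ⟪a,b⟫ - ⟪a - pa, b - pb⟫ := by
      rw [hab]; ring
    have h6 : T₂ ≤ T + x'*y' := by
      rw [← hT2', h5]
      calc ‖⟪a,b⟫ - ⟪a - pa, b - pb⟫‖ ≤ ‖⟪a,b⟫‖ + ‖⟪a - pa, b - pb⟫‖ := norm_sub_le _ _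
        _ ≤ T + x'*y' := by rw [← hT]; gcongr
    linarith
  have hi : Na*Nb + T₂ ≤ P + T := by linarith
  have hii : Na*Nb - T₂ ≤ P - T := by linarith
  have h10 : (Na*Nb)^2 = na*nb := by rw [mul_pow, hNa2, hNb2]
  have hT₂Na : T₂ ≤ Na*Nb := by
    apply le_of_sq _ _ hT₂0 (by positivity)
    linarith [sq_nonneg Dn]
  have hTP : T ≤ P := by rw [hT, hP]; exact norm_inner_le_norm _ _
  have hDnP : Dn ≤ Real.sqrt (P^2 - T^2) := by
    apply sqrt_le_of_sq_le hDn0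
    have h7 : (Na*Nb+T₂)*(Na*Nb-T₂) ≤ (P+T)*(P-T) :=
      mul_le_mul hi hii (by linarith) (by linarith)
    have e1 : (Na*Nb+T₂)*(Na*Nb-T₂) = (Na*Nb)^2 - T₂^2 := by ring
    have e2 : (P+T)*(P-T) = P^2 - T^2 := by ring
    linarith
  have hqTP : Na*Nb + q*T₂ ≤ P + q*T := by
    have h8 := mul_le_mul_of_nonneg_left hi (by linarith : (0:ℝ) ≤ 1+q)
    have h9 := mul_le_mul_of_nonneg_left hii (by linarith : (0:ℝ) ≤ 1-q)
    have e3 : 2*(Na*Nb + q*T₂) = (1+q)*(Na*Nb+T₂) + (1-q)*(Na*Nb-T₂) := by ring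
    have e4 : 2*(P + q*T) = (1+q)*(P+T) + (1-q)*(P-T) := by ring
    linarith
  have hgs : ‖a‖^2*‖b‖^2 - ‖⟪a,b⟫‖^2 = P^2 - T^2 := by rw [hP, hT]; ring
  have hkA := keyA A₁ A₂ B₁ B₂ q hq0 hq1
  rw [← hNa, ← hNb, ← hT₂] at hkA
  have hsq10 : 0 ≤ Real.sqrt (1-q^2) := Real.sqrt_nonneg _
  calc ‖((q:ℂ)*(A₁*B₁+A₂*B₂) + (A₁*B₁-A₂*B₂))/2 + ((α:ℂ)*(β:ℂ))*(A₂*B₁-A₁*B₂)‖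
      ≤ ‖((q:ℂ)*(A₁*B₁+A₂*B₂) + (A₁*B₁-A₂*B₂))/2‖ + ‖((α:ℂ)*(β:ℂ))*(A₂*B₁-A₁*B₂)‖ :=
        norm_add_le _ _
    _ = ‖(q:ℂ)*(A₁*B₁+A₂*B₂) + (A₁*B₁-A₂*B₂)‖/2 + (α*β)*Dn := by
        rw [norm_div, norm_mul, norm_mul, Complex.norm_real, Complex.norm_real,
          Real.norm_eq_abs, Real.norm_eq_abs, abs_of_nonneg hα0, abs_of_nonneg hβ0,
          ← hDn, show ‖(2:ℂ)‖ = 2 from by norm_num]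
    _ ≤ (Na*Nb + q*T₂)/2 + (Real.sqrt (1-q^2)/2)*Dn := by
        rw [hαβ]; gcongr
    _ ≤ (P + q*T)/2 + (Real.sqrt (1-q^2)/2)*Real.sqrt (P^2 - T^2) := by
        gcongr <;> linarith
    _ = (P + q*T)/2 + (Real.sqrt (1-q^2)/2)*Real.sqrt (‖a‖^2*‖b‖^2 - ‖⟪a,b⟫‖^2) := by
        rw [hgs]


-- orthogonal unit vector existence
lemma exists_orth {H : Type*} [NormedAddCommGroup H] [InnerProductSpace ℂ H]
    (hdim : 2 ≤ Module.rank ℂ H) (x : H) (hx : ‖x‖ = 1) :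
    ∃ f : H, ‖f‖ = 1 ∧ ⟪x, f⟫ = 0 := by
  have hxx : ⟪x, x⟫ = (1:ℂ) := by rw [inner_self_eq_norm_sq_to_K, hx]; norm_num
  have hne : Submodule.span ℂ ({x} : Set H) ≠ ⊤ := by
    intro h
    have h1 : Module.rank ℂ (Submodule.span ℂ ({x} : Set H)) ≤ 1 := by
      simpa using rank_span_le (R := ℂ) ({x} : Set H)
    rw [h] at h1
    rw [rank_top] at h1
    exact absurd (le_trans hdim h1) (by norm_num)
  obtain ⟨v, hv⟩ : ∃ v, v ∉ Submodule.span ℂ ({x} : Set H) := by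
    by_contra h
    push_neg at h
    exact hne (Submodule.eq_top_iff'.2 h)
  set f₀ := v - ⟪x, v⟫ • x with hf₀
  have hf₀x : ⟪x, f₀⟫ = 0 := by
    rw [hf₀, inner_sub_right, inner_smul_right, hxx]; ring
  have hf₀0 : f₀ ≠ 0 := by
    intro h
    apply hv
    rw [Submodule.mem_span_singleton]
    exact ⟨⟪x, v⟫, by rw [eq_comm, ← sub_eq_zero]; exact h ▸ rfl⟩
  refine ⟨((‖f₀‖⁻¹ : ℝ) : ℂ) • f₀, ?_, ?_⟩
  · rw [norm_smul, Complex.norm_real, Real.norm_eq_abs, abs_of_nonneg (by positivity),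
      inv_mul_cancel₀ (norm_ne_zero_iff.2 hf₀0)]
  · rw [inner_smul_right, hf₀x]; ring

/-- The generalized Buzano inequality. -/
theorem stmt1 {H : Type*} [NormedAddCommGroup H] [InnerProductSpace ℂ H] [CompleteSpace H]
    (hdim : 2 ≤ Module.rank ℂ H) (a b x y : H) (q : ℝ) (hq : q ∈ Set.Icc (0 : ℝ) 1)
    (hx : ‖x‖ = 1) (hy : ‖y‖ = 1) (hxy : ⟪x, y⟫ = (q : ℂ)) :
    ‖⟪a, x⟫ * ⟪b, y⟫‖ ≤
      (‖a‖ * ‖b‖ + q * ‖⟪a, b⟫‖) / 2 +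
        (Real.sqrt (1 - q ^ 2) / 2) * Real.sqrt (‖a‖ ^ 2 * ‖b‖ ^ 2 - ‖⟪a, b⟫‖ ^ 2) := by
  obtain ⟨hq0, hq1⟩ := hq
  have hyx : ⟪y, x⟫ = (q : ℂ) := by
    rw [← inner_conj_symm, hxy, Complex.conj_ofReal]
  have hxxi : ⟪x, x⟫ = (1:ℂ) := by rw [inner_self_eq_norm_sq_to_K, hx]; norm_num
  have hyyi : ⟪y, y⟫ = (1:ℂ) := by rw [inner_self_eq_norm_sq_to_K, hy]; norm_num
  have hsum : ‖x + y‖^2 = 2+2*q := by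
    rw [norm_add_sq (𝕜 := ℂ), hx, hy, hxy]
    simp; ring
  have hdiffsq : ‖x - y‖^2 = 2-2*q := by
    rw [norm_sub_sq (𝕜 := ℂ), hx, hy, hxy]
    simp; ring
  rcases lt_or_eq_of_le hq1 with hqlt | hqeq
  · -- q < 1
    set s := Real.sqrt (2+2*q) with hs
    set t := Real.sqrt (2-2*q) with ht
    have hs0 : 0 < s := Real.sqrt_pos.2 (by linarith)
    have ht0 : 0 < t := Real.sqrt_pos.2 (by linarith)
    have hsn : ‖x + y‖ = s := by
      rw [hs, ← hsum, Real.sqrt_sq (norm_nonneg _)]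
    have htn : ‖x - y‖ = t := by
      rw [ht, ← hdiffsq, Real.sqrt_sq (norm_nonneg _)]
    set e := ((s⁻¹ : ℝ) : ℂ) • (x + y) with he
    set f := ((t⁻¹ : ℝ) : ℂ) • (x - y) with hf
    have hen : ‖e‖ = 1 := by
      rw [he, norm_smul, Complex.norm_real, Real.norm_eq_abs,
        abs_of_nonneg (by positivity), hsn, inv_mul_cancel₀ (ne_of_gt hs0)]
    have hfn : ‖f‖ = 1 := by
      rw [hf, norm_smul, Complex.norm_real, Real.norm_eq_abs,
        abs_of_nonneg (by positivity), htn, inv_mul_cancel₀ (ne_of_gt ht0)]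
    have hef : ⟪e, f⟫ = 0 := by
      rw [he, hf, inner_smul_left, inner_smul_right, inner_sub_right, inner_add_left,
        inner_add_left, hxxi, hyyi, hxy, hyx]
      ring
    have hαs : Real.sqrt ((1+q)/2) * s⁻¹ = 1/2 := by
      rw [hs, ← Real.sqrt_inv, ← Real.sqrt_mul (by linarith),
        show (1+q)/2 * (2+2*q)⁻¹ = 1/4 by field_simp; ring,
        show (1/4 : ℝ) = (1/2)^2 by norm_num, Real.sqrt_sq (by norm_num)]
    have hβt : Real.sqrt ((1-q)/2) * t⁻¹ = 1/2 := by
      have h1 : (2:ℝ)-2*q ≠ 0 := by linarith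
      have key : (1-q)/2 * (2-2*q)⁻¹ = 1/4 := by field_simp; ring
      rw [ht, ← Real.sqrt_inv, ← Real.sqrt_mul (by linarith), key,
        show (1/4 : ℝ) = (1/2)^2 by norm_num, Real.sqrt_sq (by norm_num)]
    have hxe : x = (Real.sqrt ((1+q)/2) : ℂ) • e + (Real.sqrt ((1-q)/2) : ℂ) • f := by
      rw [he, hf, smul_smul, smul_smul, ← Complex.ofReal_mul, ← Complex.ofReal_mul,
        hαs, hβt]
      push_cast
      match_scalars <;> ring
    have hye : y = (Real.sqrt ((1+q)/2) : ℂ) • e - (Real.sqrt ((1-q)/2) : ℂ) • f := by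
      rw [he, hf, smul_smul, smul_smul, ← Complex.ofReal_mul, ← Complex.ofReal_mul,
        hαs, hβt]
      push_cast
      match_scalars <;> ring
    rw [hxe, hye]
    exact core a b e f q hq0 hq1 hen hfn hef
  · -- q = 1
    subst hqeq
    have hxy' : x = y := by
      have : ‖x - y‖^2 = 0 := by rw [hdiffsq]; ring
      have h0 : x - y = 0 := by
        rwa [pow_eq_zero_iff (by norm_num), norm_eq_zero, ] at this
      rw [← sub_eq_zero]; exact h0
    obtain ⟨f, hfn, hxf⟩ := exists_orth hdim x hx
    have hxe : x = (Real.sqrt ((1+1)/2) : ℂ) • x + (Real.sqrt ((1-1)/2) : ℂ) • f := by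
      norm_num
    have hye : y = (Real.sqrt ((1+1)/2) : ℂ) • x - (Real.sqrt ((1-1)/2) : ℂ) • f := by
      rw [← hxy']
      norm_num
    calc ‖⟪a, x⟫ * ⟪b, y⟫‖ = ‖⟪a, (Real.sqrt ((1+1)/2) : ℂ) • x + (Real.sqrt ((1-1)/2) : ℂ) • f⟫ *
          ⟪b, (Real.sqrt ((1+1)/2) : ℂ) • x - (Real.sqrt ((1-1)/2) : ℂ) • f⟫‖ := by
          rw [← hxe, ← hye]
      _ ≤ _ := by
          have := core a b x f 1 (by norm_num) (by norm_num) hx hfn hxf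
          convert this using 4 <;> norm_num
end

section
/- For all vectors a, b in H, the numerical radius of the rank-one operator a⊗b, i.e. sup{ |⟨(a⊗b)x, x⟩| : x ∈ H, ‖x‖ = 1 }, equals (‖a‖·‖b‖ + |⟨a,b⟩|)/2. -/
open scoped ComplexInnerProductSpace

/-- The rank-one operator `a ⊗ b` on a complex Hilbert space, acting by
`(a ⊗ b) x = ⟨x, a⟩ · b` (i.e. `x ↦ ⟪a, x⟫ • b` in Mathlib's convention, where the
inner product is conjugate-linear in the first slot). -/
noncomputable def rankOne {H : Type*} [NormedAddCommGroup H] [InnerProductSpace ℂ H]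
    (a b : H) : H →L[ℂ] H :=
  (innerSL ℂ a).smulRight b

/-- The `q`-numerical radius `ω_q(A) = sup { |⟨Ax, y⟩| : ‖x‖ = ‖y‖ = 1, ⟨x, y⟩ = q }`. -/
noncomputable def qRad {H : Type*} [NormedAddCommGroup H] [InnerProductSpace ℂ H]
    (q : ℝ) (A : H →L[ℂ] H) : ℝ :=
  sSup {r : ℝ | ∃ x y : H, ‖x‖ = 1 ∧ ‖y‖ = 1 ∧ ⟪x, y⟫ = (q : ℂ) ∧ r = ‖⟪A x, y⟫‖}

section aux
variable {H : Type*} [NormedAddCommGroup H] [InnerProductSpace ℂ H]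

lemma rankOne_inner_eq (a b x : H) :
    ‖⟪(rankOne a b) x, x⟫‖ = ‖⟪a, x⟫‖ * ‖⟪b, x⟫‖ := by
  simp only [rankOne, ContinuousLinearMap.smulRight_apply, innerSL_apply_apply,
    inner_smul_left, norm_mul, RCLike.norm_conj]

lemma reflect_norm (a x : H) (hx : ‖x‖ = 1) :
    ‖(2 * ⟪x, a⟫) • x - a‖ = ‖a‖ := by
  have h := norm_sub_sq (𝕜 := ℂ) ((2 * ⟪x, a⟫) • x) a
  rw [inner_smul_left, norm_smul, hx] at h
  have hc : (starRingEnd ℂ) (2 * ⟪x, a⟫) * ⟪x, a⟫ = (‖⟪x, a⟫‖ : ℂ) ^ 2 * 2 := by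
    rw [map_mul, mul_assoc, RCLike.conj_mul, Complex.conj_ofNat]
    exact mul_comm _ _
  rw [hc] at h
  have h2 : ‖(2 * ⟪x, a⟫) • x - a‖ ^ 2 = ‖a‖ ^ 2 := by
    rw [h]
    simp [norm_mul, ← Complex.ofReal_pow]
    ring
  nlinarith [norm_nonneg ((2 * ⟪x, a⟫) • x - a), norm_nonneg a]

lemma buzano (a b x : H) (hx : ‖x‖ = 1) :
    ‖⟪a, x⟫‖ * ‖⟪b, x⟫‖ ≤ (‖a‖ * ‖b‖ + ‖⟪a, b⟫‖) / 2 := by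
  set v := (2 * ⟪x, a⟫) • x - a with hv
  have hnv : ‖v‖ = ‖a‖ := reflect_norm a x hx
  have hvb : ⟪v, b⟫ = 2 * ⟪a, x⟫ * ⟪x, b⟫ - ⟪a, b⟫ := by
    rw [hv, inner_sub_left, inner_smul_left, map_mul, inner_conj_symm]
    rw [Complex.conj_ofNat]
  have h1 : ‖(2:ℂ) * ⟪a, x⟫ * ⟪x, b⟫‖ ≤ ‖a‖ * ‖b‖ + ‖⟪a, b⟫‖ := by
    calc ‖(2:ℂ) * ⟪a, x⟫ * ⟪x, b⟫‖ = ‖⟪v, b⟫ + ⟪a, b⟫‖ := by rw [hvb]; ring_nf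
      _ ≤ ‖⟪v, b⟫‖ + ‖⟪a, b⟫‖ := norm_add_le _ _
      _ ≤ ‖a‖ * ‖b‖ + ‖⟪a, b⟫‖ := by
          gcongr
          calc ‖⟪v, b⟫‖ ≤ ‖v‖ * ‖b‖ := norm_inner_le_norm v b
            _ = ‖a‖ * ‖b‖ := by rw [hnv]
  rw [norm_mul, norm_mul] at h1
  have h2 : ‖⟪x, b⟫‖ = ‖⟪b, x⟫‖ := by rw [← inner_conj_symm, RCLike.norm_conj]
  simp only [Complex.norm_ofNat] at h1
  rw [h2] at h1
  linarith

lemma witness (a b : H) (ha : a ≠ 0) (hb : b ≠ 0) :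
    ∃ x : H, ‖x‖ = 1 ∧ ‖⟪a, x⟫‖ * ‖⟪b, x⟫‖ = (‖a‖ * ‖b‖ + ‖⟪a, b⟫‖) / 2 := by
  set γ : ℂ := ⟪a, b⟫ with hγ
  set ω : ℂ := if γ = 0 then 1 else γ / ‖γ‖ with hω
  have hωn : ‖ω‖ = 1 := by
    rw [hω]; split_ifs with h
    · simp
    · simp [norm_div, h, norm_ne_zero_iff.mpr h]
  have hωγ : (starRingEnd ℂ) ω * γ = (‖γ‖ : ℂ) := by
    rw [hω]; split_ifs with h
    · simp [h]
    · rw [map_div₀, Complex.conj_ofReal]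
      rw [div_mul_eq_mul_div, Complex.conj_mul']
      rw [← Complex.ofReal_pow, ← Complex.ofReal_div]
      norm_cast
      rw [sq, mul_div_assoc, div_self (by simpa using h), mul_one]
  have hωγ' : ω * (starRingEnd ℂ) γ = (‖γ‖ : ℂ) := by
    have h2 := congrArg (starRingEnd ℂ) hωγ
    rw [map_mul, Complex.conj_conj, Complex.conj_ofReal] at h2
    exact h2
  have hcω : (starRingEnd ℂ) ω * ω = 1 := by
    rw [RCLike.conj_mul, hωn]; norm_num
  have hA : (0:ℝ) < ‖a‖ := norm_pos_iff.mpr ha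
  have hB : (0:ℝ) < ‖b‖ := norm_pos_iff.mpr hb
  have hA' : (‖a‖ : ℂ) ≠ 0 := by exact_mod_cast hA.ne'
  have hB' : (‖b‖ : ℂ) ≠ 0 := by exact_mod_cast hB.ne'
  set u : H := (ω / ‖a‖) • a + ((‖b‖ : ℂ))⁻¹ • b with hu
  have hau : ⟪a, u⟫ = ω * ‖a‖ + γ / ‖b‖ := by
    rw [hu, inner_add_right, inner_smul_right, inner_smul_right, ← hγ]
    rw [inner_self_eq_norm_sq_to_K]
    simp only [RCLike.ofReal_eq_complex_ofReal]
    field_simp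
  have hbu : ⟪b, u⟫ = (‖γ‖ : ℂ) / ‖a‖ + ‖b‖ := by
    rw [hu, inner_add_right, inner_smul_right, inner_smul_right]
    rw [inner_self_eq_norm_sq_to_K, ← inner_conj_symm, ← hγ]
    rw [div_mul_eq_mul_div, hωγ']
    simp only [RCLike.ofReal_eq_complex_ofReal]
    field_simp
  have huu : ⟪u, u⟫ = ((2 + 2 * ‖γ‖ / (‖a‖ * ‖b‖) : ℝ) : ℂ) := by
    have hωγ2 := hωγ
    rw [hu, inner_add_left, inner_smul_left, inner_smul_left, ← hu, hau, hbu,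
      map_div₀, Complex.conj_ofReal, map_inv₀, Complex.conj_ofReal]
    push_cast
    field_simp
    linear_combination ((‖a‖:ℂ) * (‖b‖:ℂ)) * hcω + hωγ2
  have hu2 : ‖u‖ ^ 2 = 2 + 2 * ‖γ‖ / (‖a‖ * ‖b‖) := by
    rw [norm_sq_eq_re_inner (𝕜 := ℂ), huu, RCLike.re_to_complex, Complex.ofReal_re]
  have hu0 : (0:ℝ) < ‖u‖ := by
    nlinarith [norm_nonneg u, norm_nonneg γ, mul_pos hA hB,
      div_nonneg (by positivity : (0:ℝ) ≤ 2 * ‖γ‖) (le_of_lt (mul_pos hA hB))]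
  refine ⟨((‖u‖:ℂ))⁻¹ • u, ?_, ?_⟩
  · rw [norm_smul, norm_inv, Complex.norm_real, Real.norm_eq_abs,
      abs_of_nonneg (norm_nonneg u)]
    field_simp
  · rw [inner_smul_right, inner_smul_right, hau, hbu, norm_mul, norm_mul]
    have h4 : ‖ω * (‖a‖:ℂ) + γ / ‖b‖‖ = ‖a‖ + ‖γ‖ / ‖b‖ := by
      have e : (starRingEnd ℂ) ω * (ω * (‖a‖:ℂ) + γ / ‖b‖) =
          ((‖a‖ + ‖γ‖ / ‖b‖ : ℝ) : ℂ) := by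
        push_cast
        field_simp
        linear_combination (‖a‖:ℂ) * (‖b‖:ℂ) * hcω + hωγ
      calc ‖ω * (‖a‖:ℂ) + γ / ‖b‖‖
          = ‖(starRingEnd ℂ) ω‖ * ‖ω * (‖a‖:ℂ) + γ / ‖b‖‖ := by
            rw [RCLike.norm_conj, hωn, one_mul]
        _ = ‖(starRingEnd ℂ) ω * (ω * (‖a‖:ℂ) + γ / ‖b‖)‖ := (norm_mul _ _).symm
        _ = ‖a‖ + ‖γ‖ / ‖b‖ := by
            rw [e, Complex.norm_real, Real.norm_eq_abs, abs_of_nonneg (by positivity)]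
    have h5 : ‖(‖γ‖ : ℂ) / ‖a‖ + ‖b‖‖ = ‖γ‖ / ‖a‖ + ‖b‖ := by
      rw [← Complex.ofReal_div, ← Complex.ofReal_add, Complex.norm_real,
        Real.norm_eq_abs, abs_of_nonneg (by positivity)]
    have h6 : ‖(((‖u‖:ℝ)) : ℂ)⁻¹‖ = ‖u‖⁻¹ := by
      rw [norm_inv, Complex.norm_real, Real.norm_eq_abs, abs_of_nonneg (norm_nonneg u)]
    rw [h4, h5, h6]
    have key : (‖a‖ + ‖γ‖ / ‖b‖) * (‖γ‖ / ‖a‖ + ‖b‖) * 2 = (‖a‖ * ‖b‖ + ‖γ‖) * ‖u‖ ^ 2 := by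
      rw [hu2]; field_simp; ring
    have hu0' : ‖u‖ ≠ 0 := hu0.ne'
    have h7 : ‖u‖⁻¹ * (‖a‖ + ‖γ‖/‖b‖) * (‖u‖⁻¹ * (‖γ‖/‖a‖ + ‖b‖)) =
        (‖a‖ + ‖γ‖/‖b‖) * (‖γ‖/‖a‖ + ‖b‖) / ‖u‖^2 := by
      rw [sq]; field_simp
    rw [h7, div_eq_div_iff (by positivity) (by norm_num : (2:ℝ) ≠ 0)]
    linarith [key]

end aux

/-- The numerical radius of a rank-one operator. -/
theorem stmt2 {H : Type*} [NormedAddCommGroup H] [InnerProductSpace ℂ H] [CompleteSpace H]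
    (hdim : 2 ≤ Module.rank ℂ H) (a b : H) :
    sSup {r : ℝ | ∃ x : H, ‖x‖ = 1 ∧ r = ‖⟪(rankOne a b) x, x⟫‖} =
      (‖a‖ * ‖b‖ + ‖⟪a, b⟫‖) / 2 := by
  have hnt : Nontrivial H := by
    rw [← rank_pos_iff_nontrivial (R := ℂ)]
    exact lt_of_lt_of_le (by norm_num) hdim
  obtain ⟨v, hv⟩ := exists_ne (0 : H)
  have hv0 : (0:ℝ) < ‖v‖ := norm_pos_iff.mpr hv
  set x₀ : H := ((‖v‖:ℂ))⁻¹ • v with hx₀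
  have hx₀n : ‖x₀‖ = 1 := by
    rw [hx₀, norm_smul, norm_inv, Complex.norm_real, Real.norm_eq_abs,
      abs_of_nonneg (norm_nonneg v)]
    field_simp
  apply le_antisymm
  · apply Real.sSup_le
    · rintro r ⟨x, hx, rfl⟩
      rw [rankOne_inner_eq]
      exact buzano a b x hx
    · positivity
  · have hbdd : BddAbove {r : ℝ | ∃ x : H, ‖x‖ = 1 ∧ r = ‖⟪(rankOne a b) x, x⟫‖} := by
      refine ⟨(‖a‖ * ‖b‖ + ‖⟪a, b⟫‖) / 2, ?_⟩
      rintro r ⟨x, hx, rfl⟩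
      rw [rankOne_inner_eq]
      exact buzano a b x hx
    rcases eq_or_ne a 0 with rfl | ha
    · have h0 : (0:ℝ) ∈ {r : ℝ | ∃ x : H, ‖x‖ = 1 ∧ r = ‖⟪(rankOne 0 b) x, x⟫‖} :=
        ⟨x₀, hx₀n, by rw [rankOne_inner_eq]; simp⟩
      have := le_csSup hbdd h0
      simpa using this
    rcases eq_or_ne b 0 with rfl | hb
    · have h0 : (0:ℝ) ∈ {r : ℝ | ∃ x : H, ‖x‖ = 1 ∧ r = ‖⟪(rankOne a 0) x, x⟫‖} :=
        ⟨x₀, hx₀n, by rw [rankOne_inner_eq]; simp⟩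
      have := le_csSup hbdd h0
      simpa using this
    obtain ⟨x, hx1, hval⟩ := witness a b ha hb
    exact le_csSup hbdd ⟨x, hx1, by rw [rankOne_inner_eq]; exact hval.symm⟩
end

section
/- For all nonzero vectors a, b in H with ⟨a,b⟩ ≠ 0 and all q ∈ [0,1], the q-numerical radius of a⊗b satisfies ω_q(a⊗b) = λ·‖a‖·‖b‖, where λ = (1 + cos(arccos(q) − arctan(√((‖a‖·‖b‖/|⟨a,b⟩|)² − 1))))/2. -/
open scoped ComplexInnerProductSpace
open Real

section Helpers
variable {H : Type*} [NormedAddCommGroup H] [InnerProductSpace ℂ H]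


lemma arccos_le_arccos {x y : ℝ} (h : x ≤ y) : arccos y ≤ arccos x := by
  unfold Real.arccos; linarith [Real.monotone_arcsin h]

lemma inner_decomp (x y z : H) (hy : ‖y‖ = 1) :
    (⟪x, z⟫ : ℂ) = ⟪x, y⟫ * ⟪y, z⟫ + ⟪x - ⟪y, x⟫ • y, z - ⟪y, z⟫ • y⟫ := by
  have hyy : (⟪y, y⟫ : ℂ) = 1 := by
    simp [inner_self_eq_norm_sq_to_K, hy]
  simp only [inner_sub_left, inner_sub_right, inner_smul_left, inner_smul_right, hyy,
    inner_conj_symm, mul_one]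
  ring

lemma norm_perp (x y : H) (hx : ‖x‖ = 1) (hy : ‖y‖ = 1) :
    ‖x - ⟪y, x⟫ • y‖ = Real.sqrt (1 - ‖⟪x, y⟫‖ ^ 2) := by
  have h2 : ‖x - ⟪y, x⟫ • y‖ ^ 2 = 1 - ‖⟪x, y⟫‖ ^ 2 := by
    have h := @norm_sub_sq ℂ _ _ _ _ x (⟪y, x⟫ • y)
    have h1 : (⟪x, ⟪y, x⟫ • y⟫ : ℂ) = ⟪y, x⟫ * ⟪x, y⟫ := by
      rw [inner_smul_right]
    have h3 : ⟪y,x⟫ * ⟪x,y⟫ = ((‖⟪x,y⟫‖:ℝ)^2 : ℂ) := by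
      rw [← inner_conj_symm x y, Complex.mul_conj', RCLike.norm_conj]
    rw [h1, h3] at h
    have h4 : ‖⟪y,x⟫ • y‖ = ‖⟪x,y⟫‖ := by
      rw [norm_smul, hy, mul_one, norm_inner_symm]
    rw [h4, hx] at h
    rw [h]
    norm_num [← Complex.ofReal_pow]
    ring
  rw [← h2, Real.sqrt_sq (norm_nonneg _)]

lemma fs_tri (x y z : H) (hx : ‖x‖ = 1) (hy : ‖y‖ = 1) (hz : ‖z‖ = 1) :
    arccos ‖⟪x, z⟫‖ ≤ arccos ‖⟪x, y⟫‖ + arccos ‖⟪y, z⟫‖ := by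
  set s := arccos ‖⟪x, y⟫‖ with hs
  set t := arccos ‖⟪y, z⟫‖ with ht
  have hxy1 : ‖⟪x, y⟫‖ ≤ 1 := by simpa [hx, hy] using norm_inner_le_norm (𝕜 := ℂ) x y
  have hyz1 : ‖⟪y, z⟫‖ ≤ 1 := by simpa [hy, hz] using norm_inner_le_norm (𝕜 := ℂ) y z
  have hcs : Real.cos s = ‖⟪x, y⟫‖ := Real.cos_arccos (by linarith [norm_nonneg (⟪x,y⟫ : ℂ)]) hxy1
  have hct : Real.cos t = ‖⟪y, z⟫‖ := Real.cos_arccos (by linarith [norm_nonneg (⟪y,z⟫ : ℂ)]) hyz1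
  have hss : Real.sin s = Real.sqrt (1 - ‖⟪x, y⟫‖ ^ 2) := Real.sin_arccos _
  have hst : Real.sin t = Real.sqrt (1 - ‖⟪y, z⟫‖ ^ 2) := Real.sin_arccos _
  have key : Real.cos (s + t) ≤ ‖⟪x, z⟫‖ := by
    rw [Real.cos_add, hcs, hct, hss, hst]
    have hdec := inner_decomp x y z hy
    have h5 : ‖(⟪x,y⟫ * ⟪y,z⟫ : ℂ)‖ - ‖(⟪x - ⟪y,x⟫ • y, z - ⟪y,z⟫ • y⟫ : ℂ)‖ ≤ ‖(⟪x,z⟫ : ℂ)‖ := by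
      rw [hdec]
      have := norm_add_le (⟪x,y⟫ * ⟪y,z⟫ + ⟪x - ⟪y,x⟫ • y, z - ⟪y,z⟫ • y⟫ : ℂ)
        (-(⟪x - ⟪y,x⟫ • y, z - ⟪y,z⟫ • y⟫ : ℂ))
      simp only [add_neg_cancel_right, norm_neg] at this
      linarith
    have h6 : ‖(⟪x - ⟪y,x⟫ • y, z - ⟪y,z⟫ • y⟫ : ℂ)‖ ≤
        Real.sqrt (1 - ‖⟪x,y⟫‖ ^ 2) * Real.sqrt (1 - ‖⟪y,z⟫‖ ^ 2) := by
      calc ‖(⟪x - ⟪y,x⟫ • y, z - ⟪y,z⟫ • y⟫ : ℂ)‖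
          ≤ ‖x - ⟪y,x⟫ • y‖ * ‖z - ⟪y,z⟫ • y‖ := norm_inner_le_norm _ _
        _ = Real.sqrt (1 - ‖⟪x,y⟫‖ ^ 2) * Real.sqrt (1 - ‖⟪y,z⟫‖ ^ 2) := by
            rw [norm_perp x y hx hy, norm_perp z y hz hy, norm_inner_symm z y]
    rw [norm_mul] at h5
    linarith
  rcases le_or_gt (s + t) Real.pi with h | h
  · have h7 : arccos ‖⟪x,z⟫‖ ≤ arccos (Real.cos (s+t)) := _root_.arccos_le_arccos key
    rwa [Real.arccos_cos (add_nonneg (hs ▸ Real.arccos_nonneg _) (ht ▸ Real.arccos_nonneg _)) h] at h7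
    -- s,t nonneg
  · linarith [Real.arccos_le_pi ‖(⟪x,z⟫ : ℂ)‖]


lemma exists_orth_s3 (hdim : 2 ≤ Module.rank ℂ H) (u : H) (hu : ‖u‖ = 1) :
    ∃ e : H, ‖e‖ = 1 ∧ ⟪u, e⟫ = (0 : ℂ) := by
  set K : Submodule ℂ H := ℂ ∙ u with hK
  have hKbot : Kᗮ ≠ ⊥ := by
    intro hbot
    have hKtop : K = ⊤ := (Submodule.orthogonal_eq_bot_iff).mp hbot
    have h1 : Module.rank ℂ K ≤ 1 := by
      simpa using rank_span_le (R := ℂ) ({u} : Set H)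
    rw [hKtop] at h1
    rw [show Module.rank ℂ (⊤ : Submodule ℂ H) = Module.rank ℂ H from (Submodule.topEquiv).rank_eq] at h1
    exact absurd (hdim.trans h1) (by norm_num)
  obtain ⟨w, hwK, hw0⟩ := Submodule.exists_mem_ne_zero_of_ne_bot hKbot
  refine ⟨(‖w‖⁻¹ : ℝ) • w, ?_, ?_⟩
  · rw [norm_smul]
    simp [norm_ne_zero_iff.mpr hw0]
  · have : ⟪u, w⟫ = (0 : ℂ) := by
      have := (Submodule.mem_orthogonal K w).mp hwK u (Submodule.mem_span_singleton_self u)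
      exact this
    rw [inner_smul_right_eq_smul]
    simp [this]


lemma inner_combo {u e : H} (hu : ‖u‖ = 1) (he : ‖e‖ = 1) (horth : ⟪u, e⟫ = (0:ℂ))
    (r s r' s' : ℝ) :
    ⟪((r:ℂ) • u + (s:ℂ) • e), ((r':ℂ) • u + (s':ℂ) • e)⟫ = ((r * r' + s * s' : ℝ) : ℂ) := by
  have huu : (⟪u, u⟫ : ℂ) = 1 := by simp [inner_self_eq_norm_sq_to_K, hu]
  have hee : (⟪e, e⟫ : ℂ) = 1 := by simp [inner_self_eq_norm_sq_to_K, he]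
  have horth' : ⟪e, u⟫ = (0:ℂ) := by
    rw [← inner_conj_symm]; simp [horth]
  simp only [inner_add_left, inner_add_right, inner_smul_left, inner_smul_right,
    huu, hee, horth, horth', Complex.conj_ofReal, mul_zero, mul_one, zero_mul, add_zero, zero_add]
  push_cast; ring

lemma norm_combo {u e : H} (hu : ‖u‖ = 1) (he : ‖e‖ = 1) (horth : ⟪u, e⟫ = (0:ℂ))
    {r s : ℝ} (hrs : r ^ 2 + s ^ 2 = 1) :
    ‖(r:ℂ) • u + (s:ℂ) • e‖ = 1 := by
  have h := inner_combo hu he horth r s r s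
  have h2 : ‖(r:ℂ) • u + (s:ℂ) • e‖ ^ 2 = 1 := by
    rw [← @inner_self_eq_norm_sq ℂ, h]
    have : RCLike.re ((r * r + s * s : ℝ) : ℂ) = r * r + s * s := by
      exact_mod_cast Complex.ofReal_re _
    rw [this]
    nlinarith [hrs]
  nlinarith [norm_nonneg ((r:ℂ) • u + (s:ℂ) • e)]

end Helpers

lemma inner_rankOne {H : Type*} [NormedAddCommGroup H] [InnerProductSpace ℂ H]
    (a b x y : H) : ⟪(rankOne a b) x, y⟫ = ⟪x, a⟫ * ⟪b, y⟫ := by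
  simp [rankOne, ContinuousLinearMap.smulRight_apply, inner_smul_left,
    inner_conj_symm]
  ring

/-- Explicit formula for `λ_q(a ⊗ b)` when `⟨a, b⟩ ≠ 0`. -/
theorem stmt3 {H : Type*} [NormedAddCommGroup H] [InnerProductSpace ℂ H] [CompleteSpace H]
    (hdim : 2 ≤ Module.rank ℂ H) (a b : H) (ha : a ≠ 0) (hb : b ≠ 0)
    (hab : ⟪a, b⟫ ≠ 0) (q : ℝ) (hq : q ∈ Set.Icc (0 : ℝ) 1) :
    qRad q (rankOne a b) =
      (1 + Real.cos (Real.arccos q -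
          Real.arctan (Real.sqrt ((‖a‖ * ‖b‖ / ‖⟪a, b⟫‖) ^ 2 - 1)))) / 2 *
        (‖a‖ * ‖b‖) := by
  obtain ⟨hq0, hq1⟩ := hq
  have hna : (0:ℝ) < ‖a‖ := norm_pos_iff.mpr ha
  have hnb : (0:ℝ) < ‖b‖ := norm_pos_iff.mpr hb
  have ht : (0:ℝ) < ‖(⟪a, b⟫ : ℂ)‖ := norm_pos_iff.mpr hab
  have htle : ‖(⟪a, b⟫ : ℂ)‖ ≤ ‖a‖ * ‖b‖ := norm_inner_le_norm a b
  set na := ‖a‖ with hna_def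
  set nb := ‖b‖ with hnb_def
  set tt := ‖(⟪a, b⟫ : ℂ)‖ with htt_def
  set c : ℝ := tt / (na * nb) with hc_def
  have hc0 : 0 < c := div_pos ht (mul_pos hna hnb)
  have hc1 : c ≤ 1 := (div_le_one (mul_pos hna hnb)).mpr htle
  -- rewrite the arctan expression as arccos c
  have harctan : Real.arctan (Real.sqrt ((na * nb / tt) ^ 2 - 1)) = Real.arccos c := by
    rw [Real.arccos_eq_arctan hc0]
    congr 1
    have h1 : (na * nb / tt) ^ 2 - 1 = (1 - c ^ 2) / c ^ 2 := by
      rw [hc_def]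
      field_simp
    rw [h1, Real.sqrt_div (by nlinarith : (0:ℝ) ≤ 1 - c ^ 2), Real.sqrt_sq hc0.le]
  rw [harctan]
  set ψ := Real.arccos c with hψ_def
  set φ := Real.arccos q with hφ_def
  have hφ0 : 0 ≤ φ := Real.arccos_nonneg q
  have hφ2 : φ ≤ π / 2 := Real.arccos_le_pi_div_two.mpr hq0
  have hψ0 : 0 ≤ ψ := Real.arccos_nonneg c
  have hψ2 : ψ ≤ π / 2 := Real.arccos_le_pi_div_two.mpr hc0.le
  have hcosφ : Real.cos φ = q := Real.cos_arccos (by linarith) hq1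
  have hcosψ : Real.cos ψ = c := Real.cos_arccos (by linarith) hc1
  have hsinψ : Real.sin ψ = Real.sqrt (1 - c ^ 2) := Real.sin_arccos c
  -- normalized vectors
  set u : H := ((na⁻¹ : ℝ) : ℂ) • a with hu_def
  set v : H := ((nb⁻¹ : ℝ) : ℂ) • b with hv_def
  have hu : ‖u‖ = 1 := by
    rw [hu_def, norm_smul]
    show ‖((na⁻¹ : ℝ) : ℂ)‖ * na = 1
    rw [Complex.norm_real, Real.norm_eq_abs, abs_of_pos (inv_pos.mpr hna)]
    exact inv_mul_cancel₀ hna.ne'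
  have hv : ‖v‖ = 1 := by
    rw [hv_def, norm_smul]
    show ‖((nb⁻¹ : ℝ) : ℂ)‖ * nb = 1
    rw [Complex.norm_real, Real.norm_eq_abs, abs_of_pos (inv_pos.mpr hnb)]
    exact inv_mul_cancel₀ hnb.ne'
  have hau : a = (na : ℂ) • u := by
    rw [hu_def, smul_smul]
    norm_cast
    rw [mul_inv_cancel₀ hna.ne']
    simp
  have hbv : b = (nb : ℂ) • v := by
    rw [hv_def, smul_smul]
    norm_cast
    rw [mul_inv_cancel₀ hnb.ne']
    simp
  have huv : ‖(⟪u, v⟫ : ℂ)‖ = c := by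
    have hexp : (⟪u, v⟫ : ℂ) = ((na⁻¹ * nb⁻¹ : ℝ) : ℂ) * ⟪a, b⟫ := by
      rw [hu_def, hv_def, inner_smul_left, inner_smul_right, Complex.conj_ofReal]
      push_cast
      ring
    rw [hexp, norm_mul, Complex.norm_real, Real.norm_eq_abs,
      abs_of_pos (by positivity : (0:ℝ) < na⁻¹ * nb⁻¹), ← htt_def, hc_def]
    field_simp
  have hxa_norm : ∀ x : H, ‖(⟪x, a⟫ : ℂ)‖ = na * ‖(⟪x, u⟫ : ℂ)‖ := by
    intro x
    conv_lhs => rw [hau]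
    rw [inner_smul_right, norm_mul]
    simp [abs_of_pos hna]
  have hby_norm : ∀ y : H, ‖(⟪b, y⟫ : ℂ)‖ = nb * ‖(⟪v, y⟫ : ℂ)‖ := by
    intro y
    conv_lhs => rw [hbv]
    rw [inner_smul_left, norm_mul]
    simp [abs_of_pos hnb]
  clear_value u v
  set R : ℝ := (1 + Real.cos (φ - ψ)) / 2 * (na * nb) with hR_def
  have hRnonneg : 0 ≤ R := by
    have h1 := Real.neg_one_le_cos (φ - ψ)
    have h2 : (0:ℝ) < na * nb := mul_pos hna hnb
    nlinarith
  show sSup _ = R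
  apply le_antisymm
  · -- upper bound
    apply Real.sSup_le _ hRnonneg
    rintro r ⟨x, y, hx, hy, hxy, rfl⟩
    rw [inner_rankOne, norm_mul, hxa_norm x, hby_norm y, norm_inner_symm x u]
    set s := Real.arccos ‖(⟪u, x⟫ : ℂ)‖ with hs_def
    set t' := Real.arccos ‖(⟪v, y⟫ : ℂ)‖ with ht'_def
    have hs0 : 0 ≤ s := Real.arccos_nonneg _
    have ht'0 : 0 ≤ t' := Real.arccos_nonneg _
    have hs2 : s ≤ π / 2 := Real.arccos_le_pi_div_two.mpr (norm_nonneg _)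
    have ht'2 : t' ≤ π / 2 := Real.arccos_le_pi_div_two.mpr (norm_nonneg _)
    have hux1 : ‖(⟪u, x⟫ : ℂ)‖ ≤ 1 := by
      simpa [hu, hx] using norm_inner_le_norm (𝕜 := ℂ) u x
    have hvy1 : ‖(⟪v, y⟫ : ℂ)‖ ≤ 1 := by
      simpa [hv, hy] using norm_inner_le_norm (𝕜 := ℂ) v y
    have hcoss : Real.cos s = ‖(⟪u, x⟫ : ℂ)‖ :=
      Real.cos_arccos (by linarith [norm_nonneg (⟪u, x⟫ : ℂ)]) hux1
    have hcost : Real.cos t' = ‖(⟪v, y⟫ : ℂ)‖ :=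
      Real.cos_arccos (by linarith [norm_nonneg (⟪v, y⟫ : ℂ)]) hvy1
    have hnq : ‖(⟪x, y⟫ : ℂ)‖ = q := by
      rw [hxy]
      simp [abs_of_nonneg hq0]
    -- triangle inequalities
    have tri1 : ψ ≤ s + φ + t' := by
      have A := fs_tri u x v hu hx hv
      have B := fs_tri x y v hx hy hv
      rw [hnq] at B
      rw [norm_inner_symm y v] at B
      rw [huv] at A
      linarith [A, B]
    have tri2 : φ ≤ s + ψ + t' := by
      have C := fs_tri x u y hx hu hy
      have D := fs_tri u v y hu hv hy
      rw [hnq, norm_inner_symm x u] at C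
      rw [huv] at D
      linarith [C, D]
    have key : Real.cos s * Real.cos t' ≤ (1 + Real.cos (φ - ψ)) / 2 := by
      have h1 : Real.cos s * Real.cos t' =
          (Real.cos (s + t') + Real.cos (s - t')) / 2 := by
        rw [Real.cos_add, Real.cos_sub]; ring
      have h2 : Real.cos (s + t') ≤ Real.cos (φ - ψ) := by
        rw [← Real.cos_abs (φ - ψ)]
        apply Real.cos_le_cos_of_nonneg_of_le_pi (abs_nonneg _)
        · linarith [Real.pi_pos]
        · rw [abs_le]
          constructor <;> linarith
      linarith [Real.cos_le_one (s - t')]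
    rw [← hcoss, ← hcost, hR_def]
    have hpos : (0:ℝ) ≤ na * nb := (mul_pos hna hnb).le
    calc na * Real.cos s * (nb * Real.cos t')
        = (Real.cos s * Real.cos t') * (na * nb) := by ring
      _ ≤ (1 + Real.cos (φ - ψ)) / 2 * (na * nb) := mul_le_mul_of_nonneg_right key hpos
  · -- lower bound: construct witnesses
    have hzdef : (⟪u, b⟫ : ℂ) = ((na⁻¹ : ℝ) : ℂ) * ⟪a, b⟫ := by
      rw [hu_def, inner_smul_left]
      simp [Complex.conj_ofReal]
    set z : ℂ := ⟪u, b⟫ with hz_def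
    have hz0 : z ≠ 0 := by
      rw [hzdef]
      simp [hab, hna.ne']
    have hznorm : ‖z‖ = nb * Real.cos ψ := by
      rw [hzdef, norm_mul, hcosψ, hc_def]
      rw [Complex.norm_real, Real.norm_eq_abs, abs_of_pos (inv_pos.mpr hna), ← htt_def]
      field_simp
    set w : H := b - z • u with hw_def
    have hworth : (⟪u, w⟫ : ℂ) = 0 := by
      rw [hw_def, inner_sub_right, inner_smul_right]
      have huu : (⟪u, u⟫ : ℂ) = 1 := by simp [inner_self_eq_norm_sq_to_K, hu]
      rw [huu, ← hz_def]
      ring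
    have hsinψ0 : 0 ≤ Real.sin ψ := Real.sin_nonneg_of_nonneg_of_le_pi hψ0
      (by linarith [Real.pi_pos])
    have hwnorm : ‖w‖ = nb * Real.sin ψ := by
      have hw2 : ‖w‖ ^ 2 = nb ^ 2 - ‖z‖ ^ 2 := by
        rw [hw_def]
        have h := @norm_sub_sq ℂ _ _ _ _ b (z • u)
        have h1 : (⟪b, z • u⟫ : ℂ) = ((‖z‖ ^ 2 : ℝ) : ℂ) := by
          rw [inner_smul_right]
          have hbu : (⟪b, u⟫ : ℂ) = (starRingEnd ℂ) z := by
            rw [hz_def, ← inner_conj_symm]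
          rw [hbu, Complex.mul_conj']
          norm_cast
        have h2 : ‖z • u‖ = ‖z‖ := by rw [norm_smul, hu, mul_one]
        rw [h1, h2] at h
        have h3 : RCLike.re (((‖z‖ ^ 2 : ℝ)) : ℂ) = ‖z‖ ^ 2 := by
          exact_mod_cast Complex.ofReal_re _
        rw [h3] at h
        rw [h, ← hnb_def]
        ring
      have hrhs : nb ^ 2 - ‖z‖ ^ 2 = (nb * Real.sin ψ) ^ 2 := by
        rw [hznorm]
        have hpy : Real.sin ψ ^ 2 = 1 - Real.cos ψ ^ 2 := by
          have := Real.sin_sq_add_cos_sq ψ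
          linarith
        rw [mul_pow, mul_pow, hpy]
        ring
      rw [hrhs] at hw2
      have h3 : 0 ≤ nb * Real.sin ψ := mul_nonneg hnb.le hsinψ0
      exact pow_left_inj₀ (norm_nonneg w) h3 (by norm_num) |>.mp hw2
    set ζ : ℂ := ((‖z‖ : ℝ) : ℂ)⁻¹ * z with hζ_def
    have hznez : ((‖z‖ : ℝ) : ℂ) ≠ 0 :=
      Complex.ofReal_ne_zero.mpr (norm_ne_zero_iff.mpr hz0)
    have hζ1 : ‖ζ‖ = 1 := by
      rw [hζ_def, norm_mul, norm_inv, Complex.norm_real, Real.norm_eq_abs, abs_norm]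
      exact inv_mul_cancel₀ (norm_ne_zero_iff.mpr hz0)
    have hζ0 : ζ ≠ 0 := by
      intro h0
      rw [h0] at hζ1
      simp at hζ1
    have hζz : ζ * ((‖z‖ : ℝ) : ℂ) = z := by
      rw [hζ_def, mul_comm (((‖z‖ : ℝ) : ℂ))⁻¹ z, mul_assoc, inv_mul_cancel₀ hznez, mul_one]
    -- unified decomposition of b
    obtain ⟨e, he, horth, hbdec⟩ :
        ∃ e : H, ‖e‖ = 1 ∧ ⟪u, e⟫ = (0:ℂ) ∧
          b = (ζ * ((nb * Real.cos ψ : ℝ) : ℂ)) • u + (ζ * ((nb * Real.sin ψ : ℝ) : ℂ)) • e := by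
      have hfirst : (ζ * ((nb * Real.cos ψ : ℝ) : ℂ)) = z := by
        have hcast : ((nb * Real.cos ψ : ℝ) : ℂ) = ((‖z‖ : ℝ) : ℂ) := by
          exact_mod_cast congrArg Complex.ofReal hznorm.symm
        rw [hcast]
        exact hζz
      by_cases hw0 : w = 0
      · obtain ⟨e, he, horth⟩ := exists_orth_s3 hdim u hu
        refine ⟨e, he, horth, ?_⟩
        have hsin0 : nb * Real.sin ψ = 0 := by
          rw [← hwnorm, hw0, norm_zero]
        have hb' : b = z • u := by
          have hsub : b - z • u = 0 := by rw [← hw_def, hw0]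
          have := sub_eq_zero.mp hsub
          exact this
        rw [hsin0, hfirst]
        simpa using hb'
      · refine ⟨(ζ⁻¹ * ((‖w‖ : ℝ) : ℂ)⁻¹) • w, ?_, ?_, ?_⟩
        · rw [norm_smul, norm_mul, norm_inv, norm_inv, hζ1]
          simp [norm_ne_zero_iff.mpr hw0]
        · rw [inner_smul_right, hworth, mul_zero]
        · have hwne : ((‖w‖ : ℝ) : ℂ) ≠ 0 := by
            simp [norm_ne_zero_iff.mpr hw0]
          have hsecond : ζ * ((nb * Real.sin ψ : ℝ) : ℂ) * (ζ⁻¹ * ((‖w‖ : ℝ) : ℂ)⁻¹) = 1 := by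
            have hcast : ((nb * Real.sin ψ : ℝ) : ℂ) = ((‖w‖ : ℝ) : ℂ) := by
              exact_mod_cast congrArg Complex.ofReal hwnorm.symm
            rw [hcast]
            field_simp
          have h2nd : (ζ * ((nb * Real.sin ψ : ℝ) : ℂ)) • ((ζ⁻¹ * ((‖w‖ : ℝ) : ℂ)⁻¹) • w) = w := by
            rw [smul_smul (ζ * ((nb * Real.sin ψ : ℝ) : ℂ)) (ζ⁻¹ * ((‖w‖ : ℝ) : ℂ)⁻¹) w,
              hsecond, one_smul]
          rw [hfirst, h2nd, hw_def]
          abel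
    -- the witness vectors
    set α : ℝ := (ψ - φ) / 2 with hα_def
    set β : ℝ := α + φ with hβ_def
    set x : H := ((Real.cos α : ℝ) : ℂ) • u + ((Real.sin α : ℝ) : ℂ) • e with hx_def
    set y : H := ((Real.cos β : ℝ) : ℂ) • u + ((Real.sin β : ℝ) : ℂ) • e with hy_def
    have hx : ‖x‖ = 1 := norm_combo hu he horth (Real.cos_sq_add_sin_sq α)
    have hy : ‖y‖ = 1 := norm_combo hu he horth (Real.cos_sq_add_sin_sq β)
    have hxy : (⟪x, y⟫ : ℂ) = (q : ℂ) := by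
      rw [hx_def, hy_def, inner_combo hu he horth]
      have : Real.cos α * Real.cos β + Real.sin α * Real.sin β = Real.cos (β - α) := by
        rw [Real.cos_sub]; ring
      rw [this]
      have : β - α = φ := by rw [hβ_def]; ring
      rw [this, hcosφ]
    -- the achieved value
    have huu1 : (⟪u, u⟫ : ℂ) = 1 := by simp [inner_self_eq_norm_sq_to_K, hu]
    have hee1 : (⟪e, e⟫ : ℂ) = 1 := by simp [inner_self_eq_norm_sq_to_K, he]
    have horth' : (⟪e, u⟫ : ℂ) = 0 := by
      rw [← inner_conj_symm]; simp [horth]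
    have hxu : (⟪x, u⟫ : ℂ) = ((Real.cos α : ℝ) : ℂ) := by
      rw [hx_def, inner_add_left, inner_smul_left, inner_smul_left, huu1, horth',
        Complex.conj_ofReal, Complex.conj_ofReal]
      ring
    have huy : (⟪u, y⟫ : ℂ) = ((Real.cos β : ℝ) : ℂ) := by
      rw [hy_def, inner_add_right, inner_smul_right, inner_smul_right, huu1, horth]
      ring
    have hey : (⟪e, y⟫ : ℂ) = ((Real.sin β : ℝ) : ℂ) := by
      rw [hy_def, inner_add_right, inner_smul_right, inner_smul_right, hee1, horth']
      ring
    have hxa : ‖(⟪x, a⟫ : ℂ)‖ = na * |Real.cos α| := by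
      rw [hxa_norm x, hxu, Complex.norm_real, Real.norm_eq_abs]
    have hby : ‖(⟪b, y⟫ : ℂ)‖ = nb * |Real.cos (β - ψ)| := by
      have hexp : (⟪b, y⟫ : ℂ) = (starRingEnd ℂ) ζ * ((nb * Real.cos (β - ψ) : ℝ) : ℂ) := by
        conv_lhs => rw [hbdec]
        rw [inner_add_left, inner_smul_left, inner_smul_left, huy, hey]
        simp only [map_mul, Complex.conj_ofReal]
        rw [Real.cos_sub]
        rw [show ((nb * (Real.cos β * Real.cos ψ + Real.sin β * Real.sin ψ) : ℝ) : ℂ)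
          = (nb : ℂ) * ((Real.cos β : ℝ) : ℂ) * ((Real.cos ψ : ℝ) : ℂ)
            + (nb : ℂ) * ((Real.sin β : ℝ) : ℂ) * ((Real.sin ψ : ℝ) : ℂ) by push_cast; ring]
        rw [show ((nb * Real.cos ψ : ℝ) : ℂ) = (nb : ℂ) * ((Real.cos ψ : ℝ) : ℂ) by push_cast; ring]
        rw [show ((nb * Real.sin ψ : ℝ) : ℂ) = (nb : ℂ) * ((Real.sin ψ : ℝ) : ℂ) by push_cast; ring]
        ring
      rw [hexp, norm_mul, RCLike.norm_conj, hζ1, one_mul, Complex.norm_real, Real.norm_eq_abs,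
        abs_mul, abs_of_pos hnb]
    have hβψ : β - ψ = (φ - ψ) / 2 := by rw [hβ_def, hα_def]; ring
    have hαeq : |Real.cos α| = |Real.cos ((φ - ψ) / 2)| := by
      rw [hα_def]
      rw [show (ψ - φ) / 2 = -((φ - ψ) / 2) by ring, Real.cos_neg]
    have habs : |Real.cos ((φ - ψ) / 2)| = Real.cos ((φ - ψ) / 2) := by
      apply abs_of_nonneg
      apply Real.cos_nonneg_of_mem_Icc
      constructor
      · linarith [Real.pi_pos]
      · linarith [Real.pi_pos]
    have hval : na * |Real.cos α| * (nb * |Real.cos (β - ψ)|) = R := by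
      rw [hβψ, hαeq, habs, hR_def]
      have hsq : Real.cos ((φ - ψ) / 2) ^ 2 = (1 + Real.cos (φ - ψ)) / 2 := by
        have := Real.cos_sq ((φ - ψ) / 2)
        rw [show 2 * ((φ - ψ) / 2) = φ - ψ by ring] at this
        linarith
      rw [← hsq]
      ring
    -- membership and boundedness
    apply le_csSup
    · refine ⟨na * nb, ?_⟩
      rintro r ⟨x', y', hx', hy', hxy', rfl⟩
      rw [inner_rankOne, norm_mul]
      calc ‖(⟪x', a⟫ : ℂ)‖ * ‖(⟪b, y'⟫ : ℂ)‖
          ≤ (‖x'‖ * ‖a‖) * (‖b‖ * ‖y'‖) :=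
            mul_le_mul (norm_inner_le_norm _ _) (norm_inner_le_norm _ _)
              (norm_nonneg _) (by positivity)
        _ = na * nb := by rw [hx', hy', ← hna_def, ← hnb_def]; ring
    · refine ⟨x, y, hx, hy, hxy, ?_⟩
      rw [inner_rankOne, norm_mul, hxa, hby, hval]
end

section
/- For all nonzero vectors a, b in H with ⟨a,b⟩ = 0 and all q ∈ [0,1], the q-numerical radius of a⊗b satisfies ω_q(a⊗b) = ((1 + √(1−q²))/2)·‖a‖·‖b‖. -/
open scoped ComplexInnerProductSpace

-- scalar inequality
lemma key_ineq {q c s t : ℝ} (hq : 0 ≤ q) (hc : 0 ≤ c) (hqc : q^2 + c^2 = 1)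
    (hs : 0 ≤ s) (ht : 0 ≤ t) (hts : t^2 + s^2 ≤ 1) :
    t * (q * s + c * Real.sqrt (1 - s^2)) ≤ (1 + c) / 2 := by
  set u := Real.sqrt (1 - s^2) with hu
  have hu0 : 0 ≤ u := Real.sqrt_nonneg _
  have hs1 : s^2 ≤ 1 := by nlinarith [sq_nonneg t]
  have hu2 : u^2 = 1 - s^2 := Real.sq_sqrt (by linarith)
  have htu : t ≤ u := by
    have h1 : t = Real.sqrt (t^2) := (Real.sqrt_sq ht).symm
    rw [h1, hu]
    exact Real.sqrt_le_sqrt (by linarith)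
  have step1 : t * (q * s + c * u) ≤ u * (q * s + c * u) :=
    mul_le_mul_of_nonneg_right htu (by positivity)
  nlinarith [sq_nonneg ((1+c)*s - q*u), step1]

-- Bessel for two orthonormal vectors
lemma bessel_two {H : Type*} [NormedAddCommGroup H] [InnerProductSpace ℂ H]
    (e1 e2 x : H) (h1 : ‖e1‖ = 1) (h2 : ‖e2‖ = 1) (h12 : ⟪e1, e2⟫ = 0) :
    ‖⟪e1, x⟫‖ ^ 2 + ‖⟪e2, x⟫‖ ^ 2 ≤ ‖x‖ ^ 2 := by
  have h21 : ⟪e2, e1⟫ = 0 := by rw [← inner_conj_symm, h12, map_zero]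
  set p : H := ⟪e1, x⟫ • e1 + ⟪e2, x⟫ • e2 with hp
  set w : H := x - p with hw
  have he1 : ⟪e1, e1⟫ = (1:ℂ) := by
    rw [inner_self_eq_norm_sq_to_K, h1]; norm_num
  have he2 : ⟪e2, e2⟫ = (1:ℂ) := by
    rw [inner_self_eq_norm_sq_to_K, h2]; norm_num
  have hwp : ⟪p, w⟫ = 0 := by
    simp only [hw, hp, inner_sub_right, inner_add_left, inner_add_right, inner_smul_left,
      inner_smul_right, h12, h21, he1, he2]
    ring
  have hx : x = p + w := by rw [hw]; abel
  have hnorm : ‖x‖^2 = ‖p‖^2 + ‖w‖^2 := by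
    have h := norm_add_sq_eq_norm_sq_add_norm_sq_of_inner_eq_zero _ _ hwp
    rw [hx, sq, h, ← sq, ← sq]
  have hpp : ⟪(⟪e1, x⟫ : ℂ) • e1, (⟪e2, x⟫ : ℂ) • e2⟫ = 0 := by
    rw [inner_smul_left, inner_smul_right, h12]; ring
  have hpn : ‖p‖^2 = ‖⟪e1, x⟫‖^2 + ‖⟪e2, x⟫‖^2 := by
    have h := norm_add_sq_eq_norm_sq_add_norm_sq_of_inner_eq_zero _ _ hpp
    rw [hp, sq, h, norm_smul, norm_smul, h1, h2]
    ring
  nlinarith [sq_nonneg ‖w‖]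

lemma upper_bound {H : Type*} [NormedAddCommGroup H] [InnerProductSpace ℂ H]
    (e1 e2 : H) (h1 : ‖e1‖ = 1) (h2 : ‖e2‖ = 1) (h12 : ⟪e1, e2⟫ = 0)
    {q : ℝ} (hq0 : 0 ≤ q) (hq1 : q ≤ 1) (x y : H)
    (hx : ‖x‖ = 1) (hy : ‖y‖ = 1) (hxy : ⟪x, y⟫ = (q : ℂ)) :
    ‖⟪e1, x⟫‖ * ‖⟪e2, y⟫‖ ≤ (1 + Real.sqrt (1 - q^2)) / 2 := by
  set c : ℝ := Real.sqrt (1 - q^2) with hc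
  have hc0 : 0 ≤ c := Real.sqrt_nonneg _
  have hc2 : c^2 = 1 - q^2 := Real.sq_sqrt (by nlinarith)
  set t : ℝ := ‖⟪e1, x⟫‖ with hts
  set s : ℝ := ‖⟪e2, x⟫‖ with hss
  have ht0 : 0 ≤ t := norm_nonneg _
  have hs0 : 0 ≤ s := norm_nonneg _
  have hbes : t^2 + s^2 ≤ 1 := by
    have := bessel_two e1 e2 x h1 h2 h12
    rwa [hx, one_pow] at this
  have hs1 : s^2 ≤ 1 := by nlinarith [sq_nonneg t]
  have hxx : ⟪x, x⟫ = (1:ℂ) := by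
    rw [inner_self_eq_norm_sq_to_K, hx]; norm_num
  set r : H := y - (q:ℂ) • x with hr
  have hxr : ⟪x, r⟫ = 0 := by
    rw [hr, inner_sub_right, inner_smul_right, hxy, hxx]; ring
  have hyx : ⟪y, x⟫ = (q:ℂ) := by
    rw [← inner_conj_symm, hxy]; simp
  have hrn2 : ‖r‖^2 = 1 - q^2 := by
    have h := norm_sub_sq (𝕜 := ℂ) y ((q:ℂ) • x)
    rw [hr, h, hy, inner_smul_right, hyx, norm_smul, hx]
    simp [Complex.norm_real, Real.norm_eq_abs, abs_of_nonneg hq0]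
    ring
  have hrn : ‖r‖ = c := by
    rw [hc, ← hrn2, Real.sqrt_sq (norm_nonneg _)]
  -- projection of e2 off x
  set v : H := e2 - (⟪x, e2⟫ : ℂ) • x with hv
  have hvn2 : ‖v‖^2 = 1 - s^2 := by
    have h := norm_sub_sq (𝕜 := ℂ) e2 ((⟪x, e2⟫ : ℂ) • x)
    rw [hv, h, h2, inner_smul_right, norm_smul, hx]
    have hconj : ⟪e2, x⟫ = (starRingEnd ℂ) ⟪x, e2⟫ := (inner_conj_symm e2 x).symm
    have hss2 : ‖⟪x, e2⟫‖ = s := by rw [hss, hconj, RCLike.norm_conj]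
    rw [show (⟪x, e2⟫ * ⟪e2, x⟫ : ℂ) = ⟪x, e2⟫ * (starRingEnd ℂ) ⟪x, e2⟫ by rw [← hconj],
      Complex.mul_conj]
    simp [hss2, ← Complex.ofReal_pow, Complex.normSq_eq_norm_sq]
    ring
  have hvn : ‖v‖ = Real.sqrt (1 - s^2) := by
    rw [← hvn2, Real.sqrt_sq (norm_nonneg _)]
  have he2r : ⟪e2, r⟫ = ⟪v, r⟫ := by
    simp [hv, inner_sub_left, inner_smul_left, hxr]
  have hbr : ‖⟪e2, r⟫‖ ≤ Real.sqrt (1 - s^2) * c := by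
    rw [he2r, ← hvn, ← hrn]; exact norm_inner_le_norm v r
  have hey : ⟪e2, y⟫ = (q:ℂ) * ⟪e2, x⟫ + ⟪e2, r⟫ := by
    rw [hr, inner_sub_right, inner_smul_right]; ring
  have hbey : ‖⟪e2, y⟫‖ ≤ q * s + c * Real.sqrt (1 - s^2) := by
    rw [hey]
    calc ‖(q:ℂ) * ⟪e2, x⟫ + ⟪e2, r⟫‖ ≤ ‖(q:ℂ) * ⟪e2, x⟫‖ + ‖⟪e2, r⟫‖ := norm_add_le _ _
    _ ≤ q * s + c * Real.sqrt (1 - s^2) := by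
        rw [norm_mul, Complex.norm_real, Real.norm_eq_abs, abs_of_nonneg hq0]
        linarith [hbr]
  calc t * ‖⟪e2, y⟫‖ ≤ t * (q * s + c * Real.sqrt (1 - s^2)) :=
        mul_le_mul_of_nonneg_left hbey ht0
  _ ≤ (1 + c) / 2 := key_ineq hq0 hc0 (by linarith) hs0 ht0 hbes

lemma norm_comb {H : Type*} [NormedAddCommGroup H] [InnerProductSpace ℂ H]
    (e1 e2 : H) (h1 : ‖e1‖ = 1) (h2 : ‖e2‖ = 1) (h12 : ⟪e1, e2⟫ = 0) (u v : ℝ) :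
    ‖(u:ℂ) • e1 + (v:ℂ) • e2‖ ^ 2 = u^2 + v^2 := by
  have hpp : ⟪(u:ℂ) • e1, (v:ℂ) • e2⟫ = 0 := by
    rw [inner_smul_left, inner_smul_right, h12]; ring
  have h := norm_add_sq_eq_norm_sq_add_norm_sq_of_inner_eq_zero _ _ hpp
  rw [sq, h, norm_smul, norm_smul, h1, h2, Complex.norm_real, Complex.norm_real,
    Real.norm_eq_abs, Real.norm_eq_abs]
  rw [← sq_abs u, ← sq_abs v]; ring

/-- The `q`-numerical radius of `a ⊗ b` for orthogonal `a`, `b`. -/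
theorem stmt4 {H : Type*} [NormedAddCommGroup H] [InnerProductSpace ℂ H] [CompleteSpace H]
    (hdim : 2 ≤ Module.rank ℂ H) (a b : H) (ha : a ≠ 0) (hb : b ≠ 0)
    (hab : ⟪a, b⟫ = 0) (q : ℝ) (hq : q ∈ Set.Icc (0 : ℝ) 1) :
    qRad q (rankOne a b) = (1 + Real.sqrt (1 - q ^ 2)) / 2 * (‖a‖ * ‖b‖) := by
  obtain ⟨hq0, hq1⟩ := hq
  set c : ℝ := Real.sqrt (1 - q^2) with hc
  have hc0 : 0 ≤ c := Real.sqrt_nonneg _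
  have hc2 : c^2 = 1 - q^2 := Real.sq_sqrt (by nlinarith)
  have hc1 : c ≤ 1 := by nlinarith
  have hna : (0:ℝ) < ‖a‖ := norm_pos_iff.2 ha
  have hnb : (0:ℝ) < ‖b‖ := norm_pos_iff.2 hb
  set e1 : H := ((‖a‖⁻¹ : ℝ) : ℂ) • a with he1def
  set e2 : H := ((‖b‖⁻¹ : ℝ) : ℂ) • b with he2def
  have h1 : ‖e1‖ = 1 := by
    rw [he1def, norm_smul, Complex.norm_real, Real.norm_eq_abs,
      abs_of_nonneg (inv_nonneg.2 hna.le)]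
    field_simp
  have h2 : ‖e2‖ = 1 := by
    rw [he2def, norm_smul, Complex.norm_real, Real.norm_eq_abs,
      abs_of_nonneg (inv_nonneg.2 hnb.le)]
    field_simp
  have h12 : ⟪e1, e2⟫ = 0 := by
    rw [he1def, he2def, inner_smul_left, inner_smul_right, hab]; ring
  have h21 : ⟪e2, e1⟫ = 0 := by rw [← inner_conj_symm, h12, map_zero]
  have hba : ⟪b, a⟫ = 0 := by rw [← inner_conj_symm, hab, map_zero]
  have he1c : ⟪e1, e1⟫ = (1:ℂ) := by rw [inner_self_eq_norm_sq_to_K, h1]; norm_num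
  have he2c : ⟪e2, e2⟫ = (1:ℂ) := by rw [inner_self_eq_norm_sq_to_K, h2]; norm_num
  have hae1 : ⟪a, e1⟫ = (‖a‖ : ℂ) := by
    rw [he1def, inner_smul_right, inner_self_eq_norm_sq_to_K]
    push_cast
    field_simp [Complex.ofReal_ne_zero.mpr hna.ne']
    rfl
  have hae2 : ⟪a, e2⟫ = 0 := by rw [he2def, inner_smul_right, hab]; ring
  have hbe1 : ⟪b, e1⟫ = 0 := by rw [he1def, inner_smul_right, hba]; ring
  have hbe2 : ⟪b, e2⟫ = (‖b‖ : ℂ) := by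
    rw [he2def, inner_smul_right, inner_self_eq_norm_sq_to_K]
    push_cast
    field_simp [Complex.ofReal_ne_zero.mpr hnb.ne']
    rfl
  set M : ℝ := (1 + c) / 2 * (‖a‖ * ‖b‖) with hM
  set S : Set ℝ :=
    {r : ℝ | ∃ x y : H, ‖x‖ = 1 ∧ ‖y‖ = 1 ∧ ⟪x, y⟫ = (q : ℂ) ∧ r = ‖⟪(rankOne a b) x, y⟫‖}
    with hS
  have hApply : ∀ x y : H, ⟪(rankOne a b) x, y⟫ = (starRingEnd ℂ) ⟪a, x⟫ * ⟪b, y⟫ := by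
    intro x y
    simp [rankOne, inner_smul_left]
    ring
  have hgreat : IsGreatest S M := by
    constructor
    · -- membership: explicit witness
      set t0 : ℝ := Real.sqrt ((1+c)/2) with ht0def
      set s0 : ℝ := Real.sqrt ((1-c)/2) with hs0def
      have ht00 : 0 ≤ t0 := Real.sqrt_nonneg _
      have hs00 : 0 ≤ s0 := Real.sqrt_nonneg _
      have ht02 : t0^2 = (1+c)/2 := Real.sq_sqrt (by linarith)
      have hs02 : s0^2 = (1-c)/2 := Real.sq_sqrt (by linarith)
      have ht0s0 : t0 * s0 = q / 2 := by
        rw [ht0def, hs0def, ← Real.sqrt_mul (by linarith)]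
        rw [show (1+c)/2 * ((1-c)/2) = (q/2)^2 by nlinarith]
        exact Real.sqrt_sq (by linarith)
      set α : ℝ := q*t0 - c*s0 with hα
      set β : ℝ := q*s0 + c*t0 with hβ
      have hβ0 : 0 ≤ β := by positivity
      set x : H := (t0:ℂ) • e1 + (s0:ℂ) • e2 with hxdef
      set y : H := (α:ℂ) • e1 + (β:ℂ) • e2 with hydef
      have hxn : ‖x‖ = 1 := by
        have h := norm_comb e1 e2 h1 h2 h12 t0 s0
        rw [← hxdef] at h
        rw [← Real.sqrt_sq (norm_nonneg x), h, show t0^2 + s0^2 = 1 by linarith,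
          Real.sqrt_one]
      have hyn : ‖y‖ = 1 := by
        have h := norm_comb e1 e2 h1 h2 h12 α β
        rw [← hydef] at h
        have hαβ : α^2 + β^2 = 1 := by
          rw [hα, hβ]
          linear_combination (q^2+c^2)*ht02 + (q^2+c^2)*hs02 + hc2
        rw [← Real.sqrt_sq (norm_nonneg y), h, hαβ, Real.sqrt_one]
      have hip : ⟪x, y⟫ = (q : ℂ) := by
        rw [hxdef, hydef]
        simp only [inner_add_left, inner_add_right, inner_smul_left, inner_smul_right,
          h12, h21, he1c, he2c, Complex.conj_ofReal, mul_zero, mul_one, add_zero, zero_add]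
        have : α * t0 + β * s0 = q := by
          rw [hα, hβ]; linear_combination q*ht02 + q*hs02
        exact_mod_cast congrArg (Complex.ofReal) this
      have hval : ‖⟪(rankOne a b) x, y⟫‖ = M := by
        have hax : ⟪a, x⟫ = ((t0 * ‖a‖ : ℝ) : ℂ) := by
          simp only [hxdef, inner_add_right, inner_smul_right, hae1, hae2]
          push_cast; ring
        have hby : ⟪b, y⟫ = ((β * ‖b‖ : ℝ) : ℂ) := by
          simp only [hydef, inner_add_right, inner_smul_right, hbe1, hbe2]
          push_cast; ring
        rw [hApply, hax, hby, Complex.conj_ofReal, ← Complex.ofReal_mul, Complex.norm_real,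
          Real.norm_eq_abs, abs_of_nonneg (by positivity)]
        have ht0β : t0 * β = (1+c)/2 := by
          rw [hβ]; linear_combination q*ht0s0 + c*ht02 + hc2/2
        rw [hM]; linear_combination (‖a‖*‖b‖) * ht0β
      exact ⟨x, y, hxn, hyn, hip, hval.symm⟩
    · -- upper bound
      rintro r ⟨x, y, hxn, hyn, hip, hrval⟩
      have hnorm : ‖⟪(rankOne a b) x, y⟫‖ = ‖⟪a, x⟫‖ * ‖⟪b, y⟫‖ := by
        rw [hApply, norm_mul, RCLike.norm_conj]
      have hax : ‖⟪e1, x⟫‖ = ‖a‖⁻¹ * ‖⟪a, x⟫‖ := by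
        rw [he1def, inner_smul_left, norm_mul, RCLike.norm_conj, Complex.norm_real,
          Real.norm_eq_abs, abs_of_nonneg (inv_nonneg.2 hna.le)]
      have hby : ‖⟪e2, y⟫‖ = ‖b‖⁻¹ * ‖⟪b, y⟫‖ := by
        rw [he2def, inner_smul_left, norm_mul, RCLike.norm_conj, Complex.norm_real,
          Real.norm_eq_abs, abs_of_nonneg (inv_nonneg.2 hnb.le)]
      have hub := upper_bound e1 e2 h1 h2 h12 hq0 hq1 x y hxn hyn hip
      rw [hax, hby] at hub
      rw [hrval, hnorm, hM]
      have hprod : ‖⟪a,x⟫‖ * ‖⟪b,y⟫‖ = (‖a‖ * ‖b‖) * ((‖a‖⁻¹ * ‖⟪a,x⟫‖) * (‖b‖⁻¹ * ‖⟪b,y⟫‖)) := by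
        field_simp
      rw [hprod]
      have h2' : (‖a‖⁻¹ * ‖⟪a,x⟫‖) * (‖b‖⁻¹ * ‖⟪b,y⟫‖) ≤ (1+c)/2 := hub
      nlinarith [mul_pos hna hnb]
  unfold qRad
  exact hgreat.csSup_eq.trans hM
end

section
/- For all vectors a, b in H and all q ∈ [0,1], the q-numerical radius (computed on the Hilbert space H ⊕ H) of the off-diagonal operator T on H ⊕ H defined by T(x, y) = ((a⊗b)y, 0) = (⟨y,a⟩·b, 0) equals ((1 + √(1−q²))/2)·‖a‖·‖b‖. -/
open scoped ComplexInnerProductSpace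

private lemma key_real (q s c t d : ℝ) (hq : 0 ≤ q) (hq1 : q ≤ 1)
    (h1 : c^2 + s^2 = 1) (h2 : t^2 + d^2 = 1) (hP : q ≤ c*t + s*d) :
    s*t ≤ (1 + Real.sqrt (1 - q^2))/2 := by
  set w := Real.sqrt (1 - q^2) with hw
  have hw0 : 0 ≤ w := Real.sqrt_nonneg _
  have hw2 : w^2 = 1 - q^2 := Real.sq_sqrt (by nlinarith)
  nlinarith [sq_nonneg (s-t), sq_nonneg (c-d), sq_nonneg (c*d - s*t + w),
    mul_self_le_mul_self hq hP, sq_nonneg (c*t+s*d)]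

set_option maxHeartbeats 1000000 in
/-- The `q`-numerical radius of the off-diagonal operator `T(x, y) = ((a ⊗ b) y, 0)`
on `H ⊕ H` equals `((1 + √(1 - q²)) / 2) · ‖a‖ · ‖b‖`. -/
theorem stmt6 {H : Type*} [NormedAddCommGroup H] [InnerProductSpace ℂ H] [CompleteSpace H]
    (hdim : 2 ≤ Module.rank ℂ H) (a b : H) (q : ℝ) (hq : q ∈ Set.Icc (0 : ℝ) 1)
    (T : WithLp 2 (H × H) →L[ℂ] WithLp 2 (H × H))
    (hT : ∀ x y : H,
      T ((WithLp.equiv 2 (H × H)).symm (x, y)) =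
        (WithLp.equiv 2 (H × H)).symm ((rankOne a b) y, 0)) :
    qRad q T = (1 + Real.sqrt (1 - q ^ 2)) / 2 * (‖a‖ * ‖b‖) := by
  obtain ⟨hq0, hq1⟩ := hq
  have hnt : Nontrivial H := by
    rw [← rank_pos_iff_nontrivial (R := ℂ)]
    exact lt_of_lt_of_le (by norm_num) hdim
  set w := Real.sqrt (1 - q ^ 2) with hwdef
  have hw0 : 0 ≤ w := Real.sqrt_nonneg _
  have hw2 : w ^ 2 = 1 - q ^ 2 := Real.sq_sqrt (by nlinarith)
  have hw1 : w ≤ 1 := by nlinarith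
  set M := (1 + w) / 2 * (‖a‖ * ‖b‖) with hM
  set S := {r : ℝ | ∃ x y : WithLp 2 (H × H),
      ‖x‖ = 1 ∧ ‖y‖ = 1 ∧ ⟪x, y⟫ = (q : ℂ) ∧ r = ‖⟪T x, y⟫‖} with hS
  -- the general inner-product formula
  have hTinner : ∀ x y : WithLp 2 (H × H),
      ⟪T x, y⟫ = (starRingEnd ℂ) ⟪a, x.snd⟫ * ⟪b, y.fst⟫ := by
    intro x y
    have h1 : T x = (WithLp.equiv 2 (H × H)).symm ((rankOne a b) x.snd, 0) := hT x.fst x.snd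
    rw [h1]
    simp [WithLp.prod_inner_apply, rankOne, inner_smul_left]
  -- upper bound
  have hub : ∀ r ∈ S, r ≤ M := by
    rintro r ⟨x, y, hx, hy, hxy, hr⟩
    have hx2 : ‖x.fst‖ ^ 2 + ‖x.snd‖ ^ 2 = 1 := by
      rw [← WithLp.prod_norm_sq_eq_of_L2, hx]; norm_num
    have hy2 : ‖y.fst‖ ^ 2 + ‖y.snd‖ ^ 2 = 1 := by
      rw [← WithLp.prod_norm_sq_eq_of_L2, hy]; norm_num
    have hP : q ≤ ‖x.fst‖ * ‖y.fst‖ + ‖x.snd‖ * ‖y.snd‖ := by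
      have : (q : ℝ) = ‖(q : ℂ)‖ := by
        rw [Complex.norm_real, Real.norm_of_nonneg hq0]
      rw [this, ← hxy, WithLp.prod_inner_apply]
      calc ‖⟪x.fst, y.fst⟫ + ⟪x.snd, y.snd⟫‖
          ≤ ‖⟪x.fst, y.fst⟫‖ + ‖⟪x.snd, y.snd⟫‖ := norm_add_le _ _
        _ ≤ ‖x.fst‖ * ‖y.fst‖ + ‖x.snd‖ * ‖y.snd‖ :=
            add_le_add (norm_inner_le_norm _ _) (norm_inner_le_norm _ _)
    have hst : ‖x.snd‖ * ‖y.fst‖ ≤ (1 + w) / 2 :=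
      key_real q ‖x.snd‖ ‖x.fst‖ ‖y.fst‖ ‖y.snd‖ hq0 hq1 hx2 hy2 hP
    have hr' : r ≤ ‖a‖ * ‖x.snd‖ * (‖b‖ * ‖y.fst‖) := by
      rw [hr, hTinner, norm_mul, RingHomIsometric.norm_map]
      exact mul_le_mul (norm_inner_le_norm _ _) (norm_inner_le_norm _ _)
        (norm_nonneg _) (by positivity)
    calc r ≤ ‖a‖ * ‖x.snd‖ * (‖b‖ * ‖y.fst‖) := hr'
      _ = (‖x.snd‖ * ‖y.fst‖) * (‖a‖ * ‖b‖) := by ring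
      _ ≤ (1 + w) / 2 * (‖a‖ * ‖b‖) :=
          mul_le_mul_of_nonneg_right hst (by positivity)
  -- membership: M is attained
  have hmem : M ∈ S := by
    by_cases hab : a = 0 ∨ b = 0
    · -- then T = 0 and M = 0
      have hM0 : M = 0 := by
        rcases hab with h | h <;> simp [hM, h]
      obtain ⟨e, he⟩ : ∃ e : H, ‖e‖ = 1 := by
        obtain ⟨e, he⟩ := NormedSpace.sphere_nonempty (E := H) (x := 0) (r := 1) |>.mpr zero_le_one
        exact ⟨e, by simpa using he⟩
      refine ⟨(WithLp.equiv 2 (H × H)).symm (e, 0),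
        (WithLp.equiv 2 (H × H)).symm ((q : ℂ) • e, (w : ℂ) • e), ?_, ?_, ?_, ?_⟩
      · have : ‖(WithLp.equiv 2 (H × H)).symm (e, (0 : H))‖ ^ 2 = 1 := by
          rw [WithLp.prod_norm_sq_eq_of_L2]; simp [he]
        nlinarith [norm_nonneg ((WithLp.equiv 2 (H × H)).symm (e, (0 : H)))]
      · have : ‖(WithLp.equiv 2 (H × H)).symm ((q : ℂ) • e, (w : ℂ) • e)‖ ^ 2 = 1 := by
          rw [WithLp.prod_norm_sq_eq_of_L2]
          simp [norm_smul, he, Complex.norm_real, abs_of_nonneg hq0, abs_of_nonneg hw0]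
          nlinarith
        nlinarith [norm_nonneg ((WithLp.equiv 2 (H × H)).symm ((q : ℂ) • e, (w : ℂ) • e))]
      · rw [WithLp.prod_inner_apply]
        simp only [WithLp.equiv_symm_apply, WithLp.toLp_fst, WithLp.toLp_snd, inner_zero_left,
          inner_smul_right, inner_self_eq_norm_sq_to_K, he]
        push_cast
        ring
      · rw [hTinner, hM0]
        rcases hab with h | h <;> simp [h]
    · push_neg at hab
      obtain ⟨ha, hb⟩ := hab
      have hna : (0:ℝ) < ‖a‖ := norm_pos_iff.mpr ha
      have hnb : (0:ℝ) < ‖b‖ := norm_pos_iff.mpr hb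
      set s : ℝ := Real.sqrt ((1 + w) / 2) with hsdef
      set c : ℝ := Real.sqrt ((1 - w) / 2) with hcdef
      have hs0 : 0 ≤ s := Real.sqrt_nonneg _
      have hc0 : 0 ≤ c := Real.sqrt_nonneg _
      have hs2 : s ^ 2 = (1 + w) / 2 := Real.sq_sqrt (by linarith)
      have hc2 : c ^ 2 = (1 - w) / 2 := Real.sq_sqrt (by linarith)
      have hsc : s * c = q / 2 := by
        rw [hsdef, hcdef, ← Real.sqrt_mul (by linarith)]
        have h1 : (1 + w) / 2 * ((1 - w) / 2) = (q / 2) ^ 2 := by nlinarith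
        rw [h1, Real.sqrt_sq (by linarith)]
      set ah : H := ((‖a‖⁻¹ : ℝ) : ℂ) • a with hahdef
      set bh : H := ((‖b‖⁻¹ : ℝ) : ℂ) • b with hbhdef
      have hnah : ‖ah‖ = 1 := by
        rw [hahdef, norm_smul, Complex.norm_real, Real.norm_of_nonneg (by positivity)]
        exact inv_mul_cancel₀ hna.ne'
      have hnbh : ‖bh‖ = 1 := by
        rw [hbhdef, norm_smul, Complex.norm_real, Real.norm_of_nonneg (by positivity)]
        exact inv_mul_cancel₀ hnb.ne'
      set x : WithLp 2 (H × H) := (WithLp.equiv 2 (H × H)).symm ((c : ℂ) • bh, (s : ℂ) • ah)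
        with hxdef
      set y : WithLp 2 (H × H) := (WithLp.equiv 2 (H × H)).symm ((s : ℂ) • bh, (c : ℂ) • ah)
        with hydef
      refine ⟨x, y, ?_, ?_, ?_, ?_⟩
      · have h2 : ‖x‖ ^ 2 = 1 := by
          rw [hxdef, WithLp.prod_norm_sq_eq_of_L2]
          simp [norm_smul, hnah, hnbh, Complex.norm_real, abs_of_nonneg hs0, abs_of_nonneg hc0]
          nlinarith
        nlinarith [norm_nonneg x]
      · have h2 : ‖y‖ ^ 2 = 1 := by
          rw [hydef, WithLp.prod_norm_sq_eq_of_L2]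
          simp [norm_smul, hnah, hnbh, Complex.norm_real, abs_of_nonneg hs0, abs_of_nonneg hc0]
          nlinarith
        nlinarith [norm_nonneg y]
      · rw [hxdef, hydef, WithLp.prod_inner_apply]
        simp only [WithLp.equiv_symm_apply, WithLp.toLp_fst, WithLp.toLp_snd,
          inner_smul_left, inner_smul_right, inner_self_eq_norm_sq_to_K, hnah, hnbh,
          Complex.conj_ofReal]
        have hq' : (q : ℂ) = ((s * c : ℝ) : ℂ) + ((c * s : ℝ) : ℂ) := by
          rw [mul_comm c s, hsc]; norm_num
        rw [hq']; push_cast; ring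
      · rw [hTinner]
        have hx2 : x.snd = (s : ℂ) • ah := rfl
        have hy1 : y.fst = (s : ℂ) • bh := rfl
        have hv : (starRingEnd ℂ) ⟪a, x.snd⟫ * ⟪b, y.fst⟫
            = ((s ^ 2 * ‖a‖ * ‖b‖ : ℝ) : ℂ) := by
          rw [hx2, hy1, hahdef, hbhdef]
          simp only [inner_smul_right, inner_self_eq_norm_sq_to_K, map_mul, map_pow,
            Complex.conj_ofReal, RCLike.conj_ofReal, RCLike.ofReal_eq_complex_ofReal]
          have hca : ((‖a‖ : ℝ) : ℂ) ≠ 0 := by exact_mod_cast hna.ne'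
          have hcb : ((‖b‖ : ℝ) : ℂ) ≠ 0 := by exact_mod_cast hnb.ne'
          push_cast
          field_simp
        rw [hv, Complex.norm_real, Real.norm_of_nonneg (by positivity), hM, hs2]
        ring
  have hbdd : BddAbove S := ⟨M, fun r hr => hub r hr⟩
  have hqr : qRad q T = sSup S := rfl
  rw [hqr]
  exact le_antisymm (csSup_le ⟨M, hmem⟩ hub) (le_csSup hbdd hmem)
end

section
/- Let a, b ∈ H, let R > ‖a‖·‖b‖, and let (α_k)_{k≥0} be a sequence of complex numbers such that the power series Σ_{k=0}^∞ α_k λ^k converges for every complex λ with |λ| < R. Then the series f(a⊗b) = Σ_{k=0}^∞ α_k (a⊗b)^k converges in operator norm, and for every q ∈ [0,1], ω_q(f(a⊗b)) ≤ ω_q(a⊗b)·|Σ_{k=1}^∞ α_k·⟨b,a⟩^{k−1}| + q·|α₀|. -/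
open scoped ComplexInnerProductSpace

lemma rankOne_mul_self {H : Type*} [NormedAddCommGroup H] [InnerProductSpace ℂ H]
    (a b : H) : rankOne a b * rankOne a b = (⟪a, b⟫ : ℂ) • rankOne a b := by
  ext x
  simp [rankOne, inner_smul_right, smul_smul, mul_comm]

lemma rankOne_pow {H : Type*} [NormedAddCommGroup H] [InnerProductSpace ℂ H]
    (a b : H) (k : ℕ) : (rankOne a b) ^ (k + 1) = ((⟪a, b⟫ : ℂ) ^ k) • rankOne a b := by
  induction k with
  | zero => simp
  | succ n ih =>
    rw [pow_succ, ih, smul_mul_assoc, rankOne_mul_self, smul_smul, ← pow_succ]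

/-- Bound on the `q`-numerical radius of an analytic function of a rank-one operator. -/
theorem stmt14 {H : Type*} [NormedAddCommGroup H] [InnerProductSpace ℂ H] [CompleteSpace H]
    (hdim : 2 ≤ Module.rank ℂ H) (a b : H) (R : ℝ) (hR : ‖a‖ * ‖b‖ < R)
    (α : ℕ → ℂ) (hconv : ∀ z : ℂ, ‖z‖ < R → Summable (fun k : ℕ => α k * z ^ k)) :
    Summable (fun k : ℕ => α k • (rankOne a b) ^ k) ∧
      ∀ q ∈ Set.Icc (0 : ℝ) 1,
        qRad q (∑' k : ℕ, α k • (rankOne a b) ^ k) ≤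
          qRad q (rankOne a b) * ‖∑' k : ℕ, α (k + 1) * ⟪a, b⟫ ^ k‖ + q * ‖α 0‖ := by
  set T := rankOne a b with hT
  set z : ℂ := ⟪a, b⟫ with hz
  have hzR : ‖z‖ < R := lt_of_le_of_lt (norm_inner_le_norm a b) hR
  -- summability of the coefficient sequence
  have hc : Summable (fun k : ℕ => α (k + 1) * z ^ k) := by
    by_cases h0 : z = 0
    · apply summable_of_ne_finset_zero (s := {0})
      intro k hk
      have : k ≠ 0 := by simpa using hk
      simp [h0, zero_pow this]
    · have h1 : Summable (fun k : ℕ => α (k + 1) * z ^ (k + 1)) :=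
        (summable_nat_add_iff (f := fun k : ℕ => α k * z ^ k) 1).2 (hconv z hzR)
      have h2 := h1.mul_right z⁻¹
      have heq : (fun k : ℕ => α (k + 1) * z ^ (k + 1) * z⁻¹)
          = fun k : ℕ => α (k + 1) * z ^ k := by
        funext k
        rw [pow_succ, ← mul_assoc, mul_assoc _ z z⁻¹, mul_inv_cancel₀ h0, mul_one]
      rwa [heq] at h2
  have hS2 : Summable (fun k : ℕ => α (k + 1) • T ^ (k + 1)) := by
    have : (fun k : ℕ => α (k + 1) • T ^ (k + 1))
        = fun k : ℕ => (α (k + 1) * z ^ k) • T := by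
      funext k
      rw [rankOne_pow, smul_smul]
    rw [this]
    exact hc.smul_const T
  have hS : Summable (fun k : ℕ => α k • T ^ k) := (summable_nat_add_iff (f := fun k : ℕ => α k • T ^ k) 1).1 hS2
  refine ⟨hS, ?_⟩
  -- compute the tsum
  set c : ℂ := ∑' k : ℕ, α (k + 1) * z ^ k with hcdef
  have htsum : (∑' k : ℕ, α k • T ^ k) = α 0 • (1 : H →L[ℂ] H) + c • T := by
    rw [Summable.tsum_eq_zero_add hS]
    have heq2 : (fun k : ℕ => α (k + 1) • T ^ (k + 1))
        = fun k : ℕ => (α (k + 1) * z ^ k) • T := by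
      funext k
      rw [rankOne_pow, smul_smul]
    rw [pow_zero, heq2, Summable.tsum_smul_const hc]
  intro q hq
  obtain ⟨hq0, hq1⟩ := hq
  -- boundedness of the qRad set for T
  have hbdd : BddAbove {r : ℝ | ∃ x y : H, ‖x‖ = 1 ∧ ‖y‖ = 1 ∧ ⟪x, y⟫ = (q : ℂ) ∧
      r = ‖⟪T x, y⟫‖} := by
    refine ⟨‖T‖, fun r hr => ?_⟩
    obtain ⟨x, y, hx, hy, hxy, rfl⟩ := hr
    calc ‖⟪T x, y⟫‖ ≤ ‖T x‖ * ‖y‖ := norm_inner_le_norm _ _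
      _ ≤ (‖T‖ * ‖x‖) * ‖y‖ := by
          exact mul_le_mul_of_nonneg_right (T.le_opNorm x) (norm_nonneg y)
      _ = ‖T‖ := by rw [hx, hy]; ring
  have hTnn : 0 ≤ qRad q T := by
    apply Real.sSup_nonneg
    rintro r ⟨x, y, hx, hy, hxy, rfl⟩
    exact norm_nonneg _
  have hRHSnn : 0 ≤ qRad q T * ‖c‖ + q * ‖α 0‖ :=
    add_nonneg (mul_nonneg hTnn (norm_nonneg _)) (mul_nonneg hq0 (norm_nonneg _))
  rw [htsum]
  apply Real.sSup_le _ hRHSnn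
  rintro r ⟨x, y, hx, hy, hxy, rfl⟩
  have hinner : ⟪(α 0 • (1 : H →L[ℂ] H) + c • T) x, y⟫
      = (starRingEnd ℂ) (α 0) * (q : ℂ) + (starRingEnd ℂ) c * ⟪T x, y⟫ := by
    simp [inner_add_left, inner_smul_left, hxy]; ring
  have hTle : ‖⟪T x, y⟫‖ ≤ qRad q T :=
    le_csSup hbdd ⟨x, y, hx, hy, hxy, rfl⟩
  calc ‖⟪(α 0 • (1 : H →L[ℂ] H) + c • T) x, y⟫‖
      ≤ ‖(starRingEnd ℂ) (α 0) * (q : ℂ)‖ + ‖(starRingEnd ℂ) c * ⟪T x, y⟫‖ := by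
        rw [hinner]; exact norm_add_le _ _
    _ = ‖α 0‖ * q + ‖c‖ * ‖⟪T x, y⟫‖ := by
        rw [norm_mul, norm_mul, RingHomIsometric.norm_map, RingHomIsometric.norm_map]
        simp [abs_of_nonneg hq0]
    _ ≤ ‖α 0‖ * q + ‖c‖ * qRad q T := by
        gcongr
    _ = qRad q T * ‖c‖ + q * ‖α 0‖ := by ring
end

section
/- For every bounded linear operator A on H and every q ∈ [0,1], the q-numerical range satisfies W_q(A) = { q·⟨Ay,y⟩ + √(1−q²)·⟨At,y⟩ : y, t ∈ H, ‖y‖ = ‖t‖ = 1, ⟨t,y⟩ = 0 }. -/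
open scoped ComplexInnerProductSpace

lemma inner_rsmul_left {H : Type*} [NormedAddCommGroup H] [InnerProductSpace ℂ H]
    (r : ℝ) (u v : H) : ⟪r • u, v⟫ = (r : ℂ) * ⟪u, v⟫ := by
  rw [RCLike.real_smul_eq_coe_smul (K := ℂ), inner_smul_left, RCLike.conj_ofReal]
  rfl

lemma inner_rsmul_right {H : Type*} [NormedAddCommGroup H] [InnerProductSpace ℂ H]
    (r : ℝ) (u v : H) : ⟪u, r • v⟫ = (r : ℂ) * ⟪u, v⟫ := by
  rw [RCLike.real_smul_eq_coe_smul (K := ℂ), inner_smul_right]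
  rfl

lemma exists_unit_orth {H : Type*} [NormedAddCommGroup H] [InnerProductSpace ℂ H]
    [CompleteSpace H] (hdim : 2 ≤ Module.rank ℂ H) (y : H) :
    ∃ t : H, ‖t‖ = 1 ∧ ⟪y, t⟫ = 0 := by
  have hbot : (ℂ ∙ y)ᗮ ≠ ⊥ := by
    intro h
    rw [Submodule.orthogonal_eq_bot_iff] at h
    have h1 : Module.rank ℂ H ≤ 1 := by
      rw [← rank_top ℂ H, ← h]
      simpa using rank_span_le (R := ℂ) ({y} : Set H)
    exact absurd (hdim.trans h1) (not_le.mpr Cardinal.one_lt_two)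
  obtain ⟨v, hv, hv0⟩ := (Submodule.ne_bot_iff _).mp hbot
  have hyv : ⟪y, v⟫ = 0 :=
    hv y (Submodule.mem_span_singleton_self y)
  refine ⟨((‖v‖ : ℂ))⁻¹ • v, ?_, ?_⟩
  · simp [norm_smul, norm_ne_zero_iff.mpr hv0]
  · simp [inner_smul_right, hyv]

lemma norm_eq_one_of_inner {H : Type*} [NormedAddCommGroup H] [InnerProductSpace ℂ H]
    (x : H) (h : ⟪x, x⟫ = 1) : ‖x‖ = 1 := by
  have h2 := inner_self_eq_norm_sq (𝕜 := ℂ) x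
  rw [h] at h2
  simp at h2
  nlinarith [norm_nonneg x]

/-- Reformulation of the `q`-numerical range. Here the paper's inner product
`⟨u, v⟩` (linear in the first slot) corresponds to Mathlib's `⟪v, u⟫` (which is
conjugate-linear in the first slot). -/
theorem stmt16 {H : Type*} [NormedAddCommGroup H] [InnerProductSpace ℂ H] [CompleteSpace H]
    (hdim : 2 ≤ Module.rank ℂ H) (A : H →L[ℂ] H) (q : ℝ) (hq : q ∈ Set.Icc (0 : ℝ) 1) :
    {w : ℂ | ∃ x y : H, ‖x‖ = 1 ∧ ‖y‖ = 1 ∧ ⟪y, x⟫ = (q : ℂ) ∧ w = ⟪y, A x⟫} =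
      {w : ℂ | ∃ y t : H, ‖y‖ = 1 ∧ ‖t‖ = 1 ∧ ⟪y, t⟫ = 0 ∧
        w = (q : ℂ) * ⟪y, A y⟫ + (Real.sqrt (1 - q ^ 2) : ℂ) * ⟪y, A t⟫} := by
  obtain ⟨hq0, hq1⟩ := hq
  set c : ℝ := Real.sqrt (1 - q ^ 2) with hc_def
  have hq2 : (0:ℝ) ≤ 1 - q ^ 2 := by nlinarith
  have hc2 : c ^ 2 = 1 - q ^ 2 := Real.sq_sqrt hq2
  have hc0 : 0 ≤ c := Real.sqrt_nonneg _
  ext w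
  simp only [Set.mem_setOf_eq]
  constructor
  · rintro ⟨x, y, hx, hy, hqxy, rfl⟩
    have hyy : ⟪y, y⟫ = 1 := by rw [inner_self_eq_norm_sq_to_K, hy]; norm_num
    have hxx : ⟪x, x⟫ = 1 := by rw [inner_self_eq_norm_sq_to_K, hx]; norm_num
    have hxy : ⟪x, y⟫ = (q : ℂ) := by
      rw [← inner_conj_symm, hqxy]; simp
    by_cases hq1' : q = 1
    · have hxeq : x = y := by
        have h0 : ⟪x - y, x - y⟫ = 0 := by
          rw [inner_sub_left, inner_sub_right, inner_sub_right, hxx, hyy, hxy, hqxy, hq1']; simp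
        rwa [inner_self_eq_zero, sub_eq_zero] at h0
      obtain ⟨t, ht, hyt⟩ := exists_unit_orth hdim y
      refine ⟨y, t, hy, ht, hyt, ?_⟩
      have hc00 : c = 0 := by rw [hc_def, hq1']; norm_num
      rw [hxeq, hc00, hq1']
      push_cast; ring
    · have hqlt : q < 1 := lt_of_le_of_ne hq1 hq1'
      have hcpos : 0 < c := Real.sqrt_pos.mpr (by nlinarith)
      have hcne : (c : ℂ) ≠ 0 := by exact_mod_cast hcpos.ne'
      set t : H := ((c : ℂ))⁻¹ • (x - (q : ℂ) • y) with ht_def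
      have key : ⟪x - (q:ℂ)•y, x - (q:ℂ)•y⟫ = ((1 - q^2 : ℝ) : ℂ) := by
        simp only [inner_sub_left, inner_sub_right, inner_rsmul_left, inner_rsmul_right,
          inner_smul_left, inner_smul_right, hxx, hyy, hxy, hqxy, Complex.conj_ofReal,
          Complex.ofReal_sub, Complex.ofReal_one, Complex.ofReal_pow]
        ring
      have htt : ⟪t, t⟫ = 1 := by
        rw [ht_def]
        simp only [inner_smul_left, inner_smul_right, key]
        rw [map_inv₀, Complex.conj_ofReal]
        have hcc : (1 - q^2 : ℝ) = c * c := by nlinarith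
        rw [hcc]
        push_cast
        field_simp
      have htnorm : ‖t‖ = 1 := norm_eq_one_of_inner t htt
      have hyt : ⟪y, t⟫ = 0 := by
        rw [ht_def]
        simp [inner_smul_right, inner_sub_right, inner_rsmul_right, hqxy, hyy, hy]
      refine ⟨y, t, hy, htnorm, hyt, ?_⟩
      have hAt : A t = ((c : ℂ))⁻¹ • (A x - (q : ℂ) • A y) := by
        rw [ht_def]; simp
      rw [hAt]
      simp only [inner_smul_right, inner_sub_right, inner_rsmul_right]
      field_simp
      ring
  · rintro ⟨y, t, hy, ht, hyt, rfl⟩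
    have hyy : ⟪y, y⟫ = 1 := by rw [inner_self_eq_norm_sq_to_K, hy]; norm_num
    have htt : ⟪t, t⟫ = 1 := by rw [inner_self_eq_norm_sq_to_K, ht]; norm_num
    have hty : ⟪t, y⟫ = 0 := by rw [← inner_conj_symm, hyt]; simp
    set x : H := (q : ℂ) • y + (c : ℂ) • t with hx_def
    have hxx : ⟪x, x⟫ = 1 := by
      rw [hx_def]
      simp only [inner_add_left, inner_add_right, inner_smul_left, inner_smul_right,
        hyy, htt, hyt, hty, Complex.conj_ofReal, mul_one, mul_zero, add_zero, zero_add]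
      have hcc : (q : ℂ) * q + c * c = 1 := by
        have hr : q * q + c * c = 1 := by nlinarith
        exact_mod_cast hr
      linear_combination hcc
    have hxnorm : ‖x‖ = 1 := norm_eq_one_of_inner x hxx
    refine ⟨x, y, hxnorm, hy, ?_, ?_⟩
    · rw [hx_def]
      simp [inner_add_right, inner_smul_right, inner_rsmul_right, hyy, hyt, hy]
    · rw [hx_def]
      simp [inner_add_right, inner_smul_right, inner_rsmul_right]
end
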